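/- arXiv:2302.06423 — 9 statements merged into one kernel-verified Lean document; each statement's English description precedes it below -/
import Mathlib

section
/- Let g and h be probability density functions on ℝ (with respect to Lebesgue measure) with h(t) > 0 for every t ∈ ℝ, and let t₁ ≤ t₂ be real numbers such that g(t) ≤ h(t) for all t ∉ [t₁,t₂], g(t) ≥ h(t) for all t ∈ [t₁,t₂], and ∫_{[t₁,t₂]} (g(t) − h(t)) dt > 0. On a probability space let T, U, S be independent random variables, where T has density h, U is uniformly distributed on [0,1], and S has density t ↦ (g(t) − h(t))·1_{[t₁,t₂]}(t) / ∫_{[t₁,t₂]}(g − h). Define Z = T if U ≤ g(T)/h(T) and Z = S otherwise. Then Z has density g, i.e. the modified rejection sampling algorithm draws a sample from the target density g with probability 1. -/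
open MeasureTheory ProbabilityTheory

/-- Proposition 1: the modified rejection sampling algorithm draws a sample from the
target density `g` with probability 1. -/
theorem modified_rejection_sampling_target_density
    {Ω : Type*} [MeasurableSpace Ω] (P : Measure Ω) [IsProbabilityMeasure P]
    (g h : ℝ → ℝ) (hg_meas : Measurable g) (hh_meas : Measurable h)
    (hg_nonneg : ∀ t, 0 ≤ g t) (hh_pos : ∀ t, 0 < h t)
    (hg_int : ∫ t, g t = 1) (hh_int : ∫ t, h t = 1)
    (t₁ t₂ : ℝ) (ht : t₁ ≤ t₂)
    (h_out : ∀ t, t ∉ Set.Icc t₁ t₂ → g t ≤ h t)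
    (h_in : ∀ t ∈ Set.Icc t₁ t₂, h t ≤ g t)
    (h_mass : 0 < ∫ t in Set.Icc t₁ t₂, (g t - h t))
    (T U S : Ω → ℝ) (hT : Measurable T) (hU : Measurable U) (hS : Measurable S)
    (h_indep : iIndepFun ![T, U, S] P)
    (hT_law : Measure.map T P = volume.withDensity (fun t => ENNReal.ofReal (h t)))
    (hU_law : Measure.map U P = volume.restrict (Set.Icc (0 : ℝ) 1))
    (hS_law : Measure.map S P = volume.withDensity (fun t =>
      ENNReal.ofReal ((if t ∈ Set.Icc t₁ t₂ then g t - h t else 0) /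
        ∫ s in Set.Icc t₁ t₂, (g s - h s)))) :
    Measure.map (fun ω => if U ω ≤ g (T ω) / h (T ω) then T ω else S ω) P =
      volume.withDensity (fun t => ENNReal.ofReal (g t)) := by
  classical
  set c : ℝ := ∫ s in Set.Icc t₁ t₂, (g s - h s) with hc_def
  have hc_pos : 0 < c := h_mass
  -- integrability
  have hg_integ : Integrable g := integrable_of_integral_eq_one hg_int
  have hh_integ : Integrable h := integrable_of_integral_eq_one hh_int
  have hdiff_integ : Integrable ((Set.Icc t₁ t₂).indicator (fun t => g t - h t)) :=
    (hg_integ.sub hh_integ).indicator measurableSet_Icc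
  have hdiff_int : ∫ t, (Set.Icc t₁ t₂).indicator (fun t => g t - h t) t = c := by
    rw [integral_indicator measurableSet_Icc]
  -- pointwise identity for min
  have hmin_eq : ∀ t, min (g t) (h t)
      = g t - (Set.Icc t₁ t₂).indicator (fun t => g t - h t) t := by
    intro t
    by_cases htI : t ∈ Set.Icc t₁ t₂
    · simp [Set.indicator_of_mem htI, min_eq_right (h_in t htI)]
    · simp [Set.indicator_of_notMem htI, min_eq_left (h_out t htI)]
  have hmin_integ : Integrable (fun t => min (g t) (h t)) := by
    have : (fun t => min (g t) (h t))
        = fun t => g t - (Set.Icc t₁ t₂).indicator (fun t => g t - h t) t :=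
      funext hmin_eq
    rw [this]; exact hg_integ.sub hdiff_integ
  have hmin_int : ∫ t, min (g t) (h t) = 1 - c := by
    simp only [hmin_eq]
    rw [integral_sub hg_integ hdiff_integ, hg_int, hdiff_int]
  have hmin_nonneg : ∀ t, 0 ≤ min (g t) (h t) :=
    fun t => le_min (hg_nonneg t) (hh_pos t).le
  have h1c : 0 ≤ 1 - c := by
    rw [← hmin_int]; exact integral_nonneg hmin_nonneg
  -- measurability of Z
  have hmeasE : MeasurableSet {ω | U ω ≤ g (T ω) / h (T ω)} :=
    measurableSet_le hU ((hg_meas.div hh_meas).comp hT)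
  have hZ : Measurable (fun ω => if U ω ≤ g (T ω) / h (T ω) then T ω else S ω) :=
    Measurable.ite hmeasE hT hS
  -- pair (T,U) and its law
  have hpair : Measurable (fun ω => (T ω, U ω)) := hT.prodMk hU
  have hmeas3 : ∀ i, Measurable (![T, U, S] i) := by
    intro i; fin_cases i <;> simpa using (by assumption : Measurable _)
  have hTU : IndepFun T U P := h_indep.indepFun (show (0 : Fin 3) ≠ 1 by decide)
  have hmap_pair : Measure.map (fun ω => (T ω, U ω)) P
      = (Measure.map T P).prod (Measure.map U P) :=
    (indepFun_iff_map_prod_eq_prod_map_map hT.aemeasurable hU.aemeasurable).mp hTU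
  have hpairS : IndepFun (fun ω => (T ω, U ω)) S P := by
    have := h_indep.indepFun_prodMk hmeas3 0 1 2 (by decide) (by decide)
    simpa using this
  -- key computation: the accepted part
  have hkey : ∀ B : Set ℝ, MeasurableSet B →
      P ((fun ω => (T ω, U ω)) ⁻¹' {p : ℝ × ℝ | p.1 ∈ B ∧ p.2 ≤ g p.1 / h p.1})
        = ∫⁻ t in B, ENNReal.ofReal (min (g t) (h t)) := by
    intro B hB
    have hsB : MeasurableSet {p : ℝ × ℝ | p.1 ∈ B ∧ p.2 ≤ g p.1 / h p.1} :=
      (hB.preimage measurable_fst).inter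
        (measurableSet_le measurable_snd ((hg_meas.div hh_meas).comp measurable_fst))
    rw [← Measure.map_apply hpair hsB, hmap_pair, hT_law, hU_law, Measure.prod_apply hsB]
    have hfib : ∀ t : ℝ, (volume.restrict (Set.Icc (0:ℝ) 1))
        (Prod.mk t ⁻¹' {p : ℝ × ℝ | p.1 ∈ B ∧ p.2 ≤ g p.1 / h p.1})
        = B.indicator (fun t => ENNReal.ofReal (min (g t / h t) 1)) t := by
      intro t
      by_cases htB : t ∈ B
      · have : Prod.mk t ⁻¹' {p : ℝ × ℝ | p.1 ∈ B ∧ p.2 ≤ g p.1 / h p.1}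
            = Set.Iic (g t / h t) := by
          ext u; simp [htB]
        rw [this, Measure.restrict_apply measurableSet_Iic, Set.indicator_of_mem htB]
        have hIic : Set.Iic (g t / h t) ∩ Set.Icc (0:ℝ) 1
            = Set.Icc 0 (min (g t / h t) 1) := by
          ext u
          simp only [Set.mem_inter_iff, Set.mem_Iic, Set.mem_Icc, le_min_iff]
          tauto
        rw [hIic, Real.volume_Icc, sub_zero]
      · have : Prod.mk t ⁻¹' {p : ℝ × ℝ | p.1 ∈ B ∧ p.2 ≤ g p.1 / h p.1} = ∅ := by
          ext u; simp [htB]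
        rw [this, Set.indicator_of_notMem htB]; simp
    simp only [hfib]
    rw [lintegral_withDensity_eq_lintegral_mul _ (hh_meas.ennreal_ofReal) (by
      exact (Measurable.indicator (by
        exact Measurable.ennreal_ofReal ((hg_meas.div hh_meas).min measurable_const)) hB))]
    have hptw : ((fun x => ENNReal.ofReal (h x))
        * B.indicator fun t => ENNReal.ofReal (min (g t / h t) 1))
        = B.indicator (fun t => ENNReal.ofReal (min (g t) (h t))) := by
      ext t
      by_cases htB : t ∈ B
      · simp only [Pi.mul_apply, Set.indicator_of_mem htB]
        rw [← ENNReal.ofReal_mul (hh_pos t).le]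
        congr 1
        rw [mul_min_of_nonneg _ _ (hh_pos t).le, mul_div_cancel₀ _ (hh_pos t).ne',
          mul_one, min_comm]
      · simp [Set.indicator_of_notMem htB]
    rw [hptw, lintegral_indicator hB]
  -- probability of rejection
  have haccept : P {ω | U ω ≤ g (T ω) / h (T ω)} = ENNReal.ofReal (1 - c) := by
    have : {ω | U ω ≤ g (T ω) / h (T ω)}
        = (fun ω => (T ω, U ω)) ⁻¹' {p : ℝ × ℝ | p.1 ∈ Set.univ ∧ p.2 ≤ g p.1 / h p.1} := by
      ext ω; simp
    rw [this, hkey Set.univ MeasurableSet.univ, Measure.restrict_univ,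
      ← ofReal_integral_eq_lintegral_ofReal hmin_integ
        (Filter.Eventually.of_forall hmin_nonneg), hmin_int]
  have hreject : P {ω | U ω ≤ g (T ω) / h (T ω)}ᶜ = ENNReal.ofReal c := by
    rw [measure_compl hmeasE (measure_ne_top P _), haccept, measure_univ,
      ← ENNReal.ofReal_one, ← ENNReal.ofReal_sub _ h1c]
    ring_nf
  -- main computation
  ext A hA
  rw [Measure.map_apply hZ hA, withDensity_apply _ hA]
  have hsplit : (fun ω => if U ω ≤ g (T ω) / h (T ω) then T ω else S ω) ⁻¹' A
      = ({ω | U ω ≤ g (T ω) / h (T ω)} ∩ T ⁻¹' A)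
        ∪ ({ω | U ω ≤ g (T ω) / h (T ω)}ᶜ ∩ S ⁻¹' A) := by
    ext ω
    by_cases hω : U ω ≤ g (T ω) / h (T ω) <;> simp [hω]
  rw [hsplit, measure_union _ (hmeasE.compl.inter (hS hA))]
  swap
  · exact Set.disjoint_of_subset (Set.inter_subset_left)
      (Set.inter_subset_left) disjoint_compl_right
  -- first term
  have hterm1 : P ({ω | U ω ≤ g (T ω) / h (T ω)} ∩ T ⁻¹' A)
      = ∫⁻ t in A, ENNReal.ofReal (min (g t) (h t)) := by
    rw [← hkey A hA]
    congr 1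
    ext ω; simp [and_comm]
  -- second term
  have hterm2 : P ({ω | U ω ≤ g (T ω) / h (T ω)}ᶜ ∩ S ⁻¹' A)
      = ∫⁻ t in A, ENNReal.ofReal (if t ∈ Set.Icc t₁ t₂ then g t - h t else 0) := by
    have hsc : MeasurableSet {p : ℝ × ℝ | p.2 ≤ g p.1 / h p.1}ᶜ :=
      (measurableSet_le measurable_snd ((hg_meas.div hh_meas).comp measurable_fst)).compl
    have hEc : {ω | U ω ≤ g (T ω) / h (T ω)}ᶜ
        = (fun ω => (T ω, U ω)) ⁻¹' {p : ℝ × ℝ | p.2 ≤ g p.1 / h p.1}ᶜ := by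
      ext ω; simp
    rw [hEc, hpairS.measure_inter_preimage_eq_mul _ _ hsc hA, ← hEc, hreject,
      ← Measure.map_apply hS hA, hS_law, withDensity_apply _ hA,
      ← lintegral_const_mul' _ _ ENNReal.ofReal_ne_top]
    congr 1
    ext t
    have hxnn : 0 ≤ (if t ∈ Set.Icc t₁ t₂ then g t - h t else 0) / c := by
      apply div_nonneg _ hc_pos.le
      split
      · next htI => linarith [h_in t htI]
      · exact le_rfl
    rw [← ENNReal.ofReal_mul hc_pos.le, mul_div_cancel₀ _ hc_pos.ne']
  rw [hterm1, hterm2, ← lintegral_add_left (by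
    exact Measurable.ennreal_ofReal (hg_meas.min hh_meas))]
  congr 1
  ext t
  rw [← ENNReal.ofReal_add (hmin_nonneg t) (by
    split
    · next htI => linarith [h_in t htI]
    · exact le_refl 0)]
  congr 1
  by_cases htI : t ∈ Set.Icc t₁ t₂
  · simp only [htI, if_true]
    rw [min_eq_right (h_in t htI)]; ring
  · simp only [htI, if_false, add_zero]
    exact min_eq_left (h_out t htI)
end

section
/- Let g and h be probability density functions on ℝ (with respect to Lebesgue measure) with h(t) > 0 for every t ∈ ℝ, and let t₁ ≤ t₂ be real numbers such that g(t) ≤ h(t) for all t ∉ [t₁,t₂] and g(t) ≥ h(t) for all t ∈ [t₁,t₂]. If T and U are independent random variables on a probability space, T with density h and U uniform on [0,1], then the acceptance probability of Steps 1–2 of the modified rejection sampling satisfies P(U ≤ g(T)/h(T)) = ∫_{(-∞,t₁)} g(t) dt + ∫_{[t₁,t₂]} h(t) dt + ∫_{(t₂,∞)} g(t) dt. -/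
open MeasureTheory ProbabilityTheory

/-- The acceptance probability of Steps 1–2 of the modified rejection sampling:
`P(U ≤ g(T)/h(T)) = ∫_{(-∞,t₁)} g + ∫_{[t₁,t₂]} h + ∫_{(t₂,∞)} g`. -/
theorem modified_rejection_sampling_acceptance_probability
    {Ω : Type*} [MeasurableSpace Ω] (P : Measure Ω) [IsProbabilityMeasure P]
    (g h : ℝ → ℝ) (hg_meas : Measurable g) (hh_meas : Measurable h)
    (hg_nonneg : ∀ t, 0 ≤ g t) (hh_pos : ∀ t, 0 < h t)
    (hg_int : ∫ t, g t = 1) (hh_int : ∫ t, h t = 1)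
    (t₁ t₂ : ℝ) (ht : t₁ ≤ t₂)
    (h_out : ∀ t, t ∉ Set.Icc t₁ t₂ → g t ≤ h t)
    (h_in : ∀ t ∈ Set.Icc t₁ t₂, h t ≤ g t)
    (T U : Ω → ℝ) (hT : Measurable T) (hU : Measurable U)
    (h_indep : IndepFun T U P)
    (hT_law : Measure.map T P = volume.withDensity (fun t => ENNReal.ofReal (h t)))
    (hU_law : Measure.map U P = volume.restrict (Set.Icc (0 : ℝ) 1)) :
    (P {ω | U ω ≤ g (T ω) / h (T ω)}).toReal =
      (∫ t in Set.Iio t₁, g t) + (∫ t in Set.Icc t₁ t₂, h t) + (∫ t in Set.Ioi t₂, g t) := by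
  have hg_i : Integrable g := by
    by_contra hc
    rw [integral_undef hc] at hg_int; norm_num at hg_int
  have hh_i : Integrable h := by
    by_contra hc
    rw [integral_undef hc] at hh_int; norm_num at hh_int
  have hf_meas : Measurable fun t => g t / h t := hg_meas.div hh_meas
  have hS : MeasurableSet {p : ℝ × ℝ | p.2 ≤ g p.1 / h p.1} :=
    measurableSet_le measurable_snd (hf_meas.comp measurable_fst)
  have h1 : P {ω | U ω ≤ g (T ω) / h (T ω)}
      = (Measure.map (fun ω => (T ω, U ω)) P) {p : ℝ × ℝ | p.2 ≤ g p.1 / h p.1} := by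
    rw [Measure.map_apply (hT.prodMk hU) hS]; rfl
  have h2 : Measure.map (fun ω => (T ω, U ω)) P
      = (Measure.map T P).prod (Measure.map U P) :=
    (indepFun_iff_map_prod_eq_prod_map_map hT.aemeasurable hU.aemeasurable).mp h_indep
  rw [h1, h2, hT_law, hU_law]
  rw [Measure.prod_apply hS]
  -- the slice measure
  have hslice : ∀ t : ℝ,
      (volume.restrict (Set.Icc (0:ℝ) 1)) (Prod.mk t ⁻¹' {p : ℝ × ℝ | p.2 ≤ g p.1 / h p.1})
      = ENNReal.ofReal (min (g t / h t) 1) := by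
    intro t
    have hpre : Prod.mk t ⁻¹' {p : ℝ × ℝ | p.2 ≤ g p.1 / h p.1} = Set.Iic (g t / h t) := rfl
    rw [hpre, Measure.restrict_apply measurableSet_Iic]
    have hft : 0 ≤ g t / h t := div_nonneg (hg_nonneg t) (hh_pos t).le
    have hset : Set.Iic (g t / h t) ∩ Set.Icc 0 1 = Set.Icc 0 (min (g t / h t) 1) := by
      ext x
      simp only [Set.mem_inter_iff, Set.mem_Iic, Set.mem_Icc, le_min_iff]
      constructor
      · rintro ⟨hx, hx0, hx1⟩; exact ⟨hx0, hx, hx1⟩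
      · rintro ⟨hx0, hx, hx1⟩; exact ⟨hx, hx0, hx1⟩
    rw [hset, Real.volume_Icc, sub_zero]
  simp_rw [hslice]
  rw [lintegral_withDensity_eq_lintegral_mul _ (hh_meas.ennreal_ofReal)
    ((hf_meas.min measurable_const).ennreal_ofReal)]
  have hpt : ∀ t : ℝ,
      ((fun t => ENNReal.ofReal (h t)) * fun t => ENNReal.ofReal (min (g t / h t) 1)) t
      = ENNReal.ofReal (min (g t) (h t)) := by
    intro t
    simp only [Pi.mul_apply]
    rw [← ENNReal.ofReal_mul (hh_pos t).le]
    congr 1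
    rcases le_total (g t) (h t) with hle | hle
    · rw [min_eq_left ((div_le_one (hh_pos t)).mpr hle), min_eq_left hle,
        mul_div_cancel₀ _ (hh_pos t).ne']
    · rw [min_eq_right ((one_le_div (hh_pos t)).mpr hle), mul_one, min_eq_right hle]
  -- split ℝ into three pieces
  have hcover : (Set.univ : Set ℝ) = Set.Iio t₁ ∪ (Set.Icc t₁ t₂ ∪ Set.Ioi t₂) := by
    ext x
    simp only [Set.mem_univ, Set.mem_union, Set.mem_Iio, Set.mem_Icc, Set.mem_Ioi, true_iff]
    rcases lt_or_ge x t₁ with hx | hx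
    · exact Or.inl hx
    · rcases le_or_gt x t₂ with hx2 | hx2
      · exact Or.inr (Or.inl ⟨hx, hx2⟩)
      · exact Or.inr (Or.inr hx2)
  have hd1 : Disjoint (Set.Iio t₁) (Set.Icc t₁ t₂ ∪ Set.Ioi t₂) := by
    rw [Set.disjoint_union_right]
    constructor
    · exact Set.disjoint_left.mpr fun x hx hx2 => absurd hx2.1 (not_le.mpr hx)
    · exact Set.disjoint_left.mpr fun x hx hx2 => absurd (ht.trans hx2.le) (not_le.mpr hx)
  have hd2 : Disjoint (Set.Icc t₁ t₂) (Set.Ioi t₂) :=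
    Set.disjoint_left.mpr fun x hx hx2 => absurd hx.2 (not_le.mpr hx2)
  have hsplit : ∫⁻ t, ENNReal.ofReal (min (g t) (h t))
      = (∫⁻ t in Set.Iio t₁, ENNReal.ofReal (min (g t) (h t)))
        + ((∫⁻ t in Set.Icc t₁ t₂, ENNReal.ofReal (min (g t) (h t)))
          + (∫⁻ t in Set.Ioi t₂, ENNReal.ofReal (min (g t) (h t)))) := by
    rw [← lintegral_union measurableSet_Ioi hd2,
      ← lintegral_union (measurableSet_Icc.union measurableSet_Ioi) hd1,
      ← hcover, Measure.restrict_univ]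
  rw [lintegral_congr hpt, hsplit]
  have e1 : ∫⁻ t in Set.Iio t₁, ENNReal.ofReal (min (g t) (h t))
      = ENNReal.ofReal (∫ t in Set.Iio t₁, g t) := by
    rw [setLIntegral_congr_fun measurableSet_Iio
      (show Set.EqOn (fun t => ENNReal.ofReal (min (g t) (h t))) (fun t => ENNReal.ofReal (g t))
        (Set.Iio t₁) from fun t (htt : t ∈ Set.Iio t₁) => by
        beta_reduce; rw [min_eq_left (h_out t (fun hc => absurd hc.1 (not_le.mpr htt)))]),
      ← ofReal_integral_eq_lintegral_ofReal (hg_i.restrict)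
        (Filter.Eventually.of_forall fun t => hg_nonneg t)]
  have e2 : ∫⁻ t in Set.Icc t₁ t₂, ENNReal.ofReal (min (g t) (h t))
      = ENNReal.ofReal (∫ t in Set.Icc t₁ t₂, h t) := by
    rw [setLIntegral_congr_fun measurableSet_Icc
      (show Set.EqOn (fun t => ENNReal.ofReal (min (g t) (h t))) (fun t => ENNReal.ofReal (h t))
        (Set.Icc t₁ t₂) from fun t (htt : t ∈ Set.Icc t₁ t₂) => by
        beta_reduce; rw [min_eq_right (h_in t htt)]),
      ← ofReal_integral_eq_lintegral_ofReal (hh_i.restrict)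
        (Filter.Eventually.of_forall fun t => (hh_pos t).le)]
  have e3 : ∫⁻ t in Set.Ioi t₂, ENNReal.ofReal (min (g t) (h t))
      = ENNReal.ofReal (∫ t in Set.Ioi t₂, g t) := by
    rw [setLIntegral_congr_fun measurableSet_Ioi
      (show Set.EqOn (fun t => ENNReal.ofReal (min (g t) (h t))) (fun t => ENNReal.ofReal (g t))
        (Set.Ioi t₂) from fun t (htt : t ∈ Set.Ioi t₂) => by
        beta_reduce; rw [min_eq_left (h_out t (fun hc => absurd hc.2 (not_le.mpr htt)))]),
      ← ofReal_integral_eq_lintegral_ofReal (hg_i.restrict)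
        (Filter.Eventually.of_forall fun t => hg_nonneg t)]
  rw [e1, e2, e3, ← ENNReal.ofReal_add (integral_nonneg fun t => (hh_pos t).le)
      (integral_nonneg fun t => hg_nonneg t),
    ← ENNReal.ofReal_add (integral_nonneg fun t => hg_nonneg t)
      (add_nonneg (integral_nonneg fun t => (hh_pos t).le)
        (integral_nonneg fun t => hg_nonneg t)),
    ENNReal.toReal_ofReal (add_nonneg (integral_nonneg fun t => hg_nonneg t)
      (add_nonneg (integral_nonneg fun t => (hh_pos t).le)
        (integral_nonneg fun t => hg_nonneg t)))]
  ring
end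

section
/- Fix a positive integer γ. Let (αₙ) and (βₙ) be real sequences with αₙ > 0, βₙ < 0, and βₙ/αₙ → −∞. For each n let Nₙ = ∫₀^∞ x^γ e^{−αₙ²x² + βₙx} dx, let qₙ(x) = x^γ e^{−αₙ²x² + βₙx}/Nₙ be the three-parameter Gamma density G3p(γ, αₙ, βₙ) on (0,∞), and let pₙ(x) = ((−βₙ)^{γ+1}/γ!) x^γ e^{βₙx} be the Gamma density with shape d = γ+1 and rate c = −βₙ on (0,∞). Then the Kullback–Leibler divergence KL(pₙ ∥ qₙ) = ∫₀^∞ pₙ(x) log(pₙ(x)/qₙ(x)) dx converges to 0 as n → ∞. -/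
open MeasureTheory Filter

/-- The unnormalized three-parameter Gamma kernel `x^γ e^{−a²x² + bx}`. -/
noncomputable def g3pKernel (γ : ℕ) (a b : ℝ) (x : ℝ) : ℝ :=
  x ^ γ * Real.exp (-a ^ 2 * x ^ 2 + b * x)

/-- The normalizing constant `N(γ,a,b) = ∫₀^∞ x^γ e^{−a²x² + bx} dx`. -/
noncomputable def g3pNorm (γ : ℕ) (a b : ℝ) : ℝ :=
  ∫ x in Set.Ioi (0 : ℝ), g3pKernel γ a b x

/-- The three-parameter Gamma density `G3p(γ,a,b)` on `(0,∞)`. -/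
noncomputable def g3pDensity (γ : ℕ) (a b : ℝ) (x : ℝ) : ℝ :=
  g3pKernel γ a b x / g3pNorm γ a b

/-- The Gamma density with shape `d = γ+1` and rate `c = −b` on `(0,∞)`. -/
noncomputable def gammaShapeRateDensity (γ : ℕ) (b : ℝ) (x : ℝ) : ℝ :=
  (-b) ^ (γ + 1) / (Nat.factorial γ) * x ^ γ * Real.exp (b * x)

open Nat Set Real in
lemma intOn_pow_exp (n : ℕ) {c : ℝ} (hc : 0 < c) :
    IntegrableOn (fun x : ℝ => x ^ n * Real.exp (-(c * x))) (Set.Ioi 0) := by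
  have h := integrableOn_rpow_mul_exp_neg_mul_rpow (p := 1) (s := n) (b := c)
    (lt_of_lt_of_le neg_one_lt_zero (Nat.cast_nonneg n)) one_pos hc
  refine h.congr_fun (fun x hx => ?_) measurableSet_Ioi
  beta_reduce
  rw [Real.rpow_one, Real.rpow_natCast, neg_mul]

open Nat in
lemma int_pow_exp (n : ℕ) {c : ℝ} (hc : 0 < c) :
    ∫ x in Set.Ioi (0:ℝ), x ^ n * Real.exp (-(c * x)) = (n ! : ℝ) / c ^ (n + 1) := by
  have h := Real.integral_rpow_mul_exp_neg_mul_Ioi (a := (n : ℝ) + 1) (r := c)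
    (by positivity) hc
  rw [show ((n : ℝ) + 1 - 1) = (n : ℝ) by ring] at h
  simp_rw [Real.rpow_natCast, Real.Gamma_nat_eq_factorial] at h
  rw [h, show ((n : ℝ) + 1) = ((n + 1 : ℕ) : ℝ) by push_cast; ring,
    Real.rpow_natCast]
  rw [div_pow, one_pow, one_div, inv_mul_eq_div]

lemma kernel_cont (γ : ℕ) (a b : ℝ) : Continuous (g3pKernel γ a b) := by
  unfold g3pKernel; fun_prop

lemma kernel_pos (γ : ℕ) (a b : ℝ) {x : ℝ} (hx : 0 < x) : 0 < g3pKernel γ a b x := by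
  unfold g3pKernel; positivity

lemma intOn_kernel (γ : ℕ) (a : ℝ) {b : ℝ} (hb : b < 0) :
    IntegrableOn (g3pKernel γ a b) (Set.Ioi 0) := by
  refine Integrable.mono' (intOn_pow_exp γ (neg_pos.2 hb))
    (kernel_cont γ a b).aestronglyMeasurable ?_
  refine (ae_restrict_iff' measurableSet_Ioi).2 (ae_of_all _ fun x hx => ?_)
  have hx0 : (0:ℝ) < x := hx
  have h1 : Real.exp (-a ^ 2 * x ^ 2 + b * x) ≤ Real.exp (-(-b * x)) := by
    apply Real.exp_le_exp.2; nlinarith [sq_nonneg a, sq_nonneg x]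
  rw [Real.norm_eq_abs, abs_of_nonneg (kernel_pos γ a b hx0).le]
  exact mul_le_mul_of_nonneg_left h1 (by positivity)

lemma norm_pos (γ : ℕ) (a : ℝ) {b : ℝ} (hb : b < 0) : 0 < g3pNorm γ a b := by
  rw [g3pNorm, setIntegral_pos_iff_support_of_nonneg_ae]
  · refine lt_of_lt_of_le ?_
      (measure_mono (fun x hx => (⟨(kernel_pos γ a b hx).ne', hx⟩ :
        x ∈ Function.support (g3pKernel γ a b) ∩ Set.Ioi 0)))
    show (0:ENNReal) < volume (Set.Ioi (0:ℝ))
    rw [Real.volume_Ioi]; exact ENNReal.zero_lt_top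
  · exact (ae_restrict_iff' measurableSet_Ioi).2
      (ae_of_all _ fun x hx => (kernel_pos γ a b hx).le)
  · exact intOn_kernel γ a hb

open Nat in
lemma norm_le (γ : ℕ) (a : ℝ) {b : ℝ} (hb : b < 0) :
    g3pNorm γ a b ≤ (γ ! : ℝ) / (-b) ^ (γ + 1) := by
  have hc : (0:ℝ) < -b := neg_pos.2 hb
  rw [← int_pow_exp γ hc]
  refine setIntegral_mono_on (intOn_kernel γ a hb) (intOn_pow_exp γ hc)
    measurableSet_Ioi (fun x hx => ?_)
  have hx0 : (0:ℝ) < x := hx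
  have h1 : Real.exp (-a ^ 2 * x ^ 2 + b * x) ≤ Real.exp (-(-b * x)) := by
    apply Real.exp_le_exp.2; nlinarith [sq_nonneg a, sq_nonneg x]
  exact mul_le_mul_of_nonneg_left h1 (by positivity)

open Nat in
lemma le_norm (γ : ℕ) (a : ℝ) {b : ℝ} (hb : b < 0) :
    (γ ! : ℝ) / (-b) ^ (γ + 1) - a ^ 2 * (((γ + 2)! : ℝ) / (-b) ^ (γ + 3))
      ≤ g3pNorm γ a b := by
  have hc : (0:ℝ) < -b := neg_pos.2 hb
  have key : ∫ x in Set.Ioi (0:ℝ),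
      (x ^ γ * Real.exp (-(-b * x)) - a ^ 2 * (x ^ (γ + 2) * Real.exp (-(-b * x))))
      = (γ ! : ℝ) / (-b) ^ (γ + 1) - a ^ 2 * (((γ + 2)! : ℝ) / (-b) ^ (γ + 3)) := by
    rw [integral_sub (intOn_pow_exp γ hc) ((intOn_pow_exp (γ + 2) hc).const_mul _),
      integral_const_mul, int_pow_exp γ hc, int_pow_exp (γ + 2) hc]
  rw [← key]
  refine setIntegral_mono_on
    ((intOn_pow_exp γ hc).sub ((intOn_pow_exp (γ + 2) hc).const_mul _))
    (intOn_kernel γ a hb) measurableSet_Ioi (fun x hx => ?_)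
  have hx0 : (0:ℝ) < x := hx
  have h1 : 1 - a ^ 2 * x ^ 2 ≤ Real.exp (-(a ^ 2 * x ^ 2)) := by
    have := Real.add_one_le_exp (-(a ^ 2 * x ^ 2)); linarith
  have he : Real.exp (-a ^ 2 * x ^ 2 + b * x)
      = Real.exp (b * x) * Real.exp (-(a ^ 2 * x ^ 2)) := by
    rw [← Real.exp_add]; ring_nf
  have h2 : x ^ γ * Real.exp (b * x) * (1 - a ^ 2 * x ^ 2)
      ≤ x ^ γ * Real.exp (b * x) * Real.exp (-(a ^ 2 * x ^ 2)) :=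
    mul_le_mul_of_nonneg_left h1 (by positivity)
  calc x ^ γ * Real.exp (-(-b * x)) - a ^ 2 * (x ^ (γ + 2) * Real.exp (-(-b * x)))
      = x ^ γ * Real.exp (b * x) * (1 - a ^ 2 * x ^ 2) := by
        rw [show -(-b * x) = b * x by ring, pow_add]; ring
    _ ≤ x ^ γ * Real.exp (b * x) * Real.exp (-(a ^ 2 * x ^ 2)) := h2
    _ = g3pKernel γ a b x := by rw [g3pKernel, he]; ring

open Nat in
lemma kl_eq (γ : ℕ) (a : ℝ) {b : ℝ} (hb : b < 0) :
    (∫ x in Set.Ioi (0:ℝ), gammaShapeRateDensity γ b x *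
        Real.log (gammaShapeRateDensity γ b x / g3pDensity γ a b x))
    = Real.log (g3pNorm γ a b * ((-b) ^ (γ + 1) / (γ ! : ℝ)))
      + ((γ + 2)! : ℝ) / (γ ! : ℝ) * (a / b) ^ 2 := by
  have hc : (0:ℝ) < -b := neg_pos.2 hb
  have hN := norm_pos γ a hb
  have hfac : (0:ℝ) < (γ ! : ℝ) := by exact_mod_cast Nat.factorial_pos γ
  set L := Real.log (g3pNorm γ a b * ((-b) ^ (γ + 1) / (γ ! : ℝ))) with hL
  have hstep : Set.EqOn
      (fun x => gammaShapeRateDensity γ b x *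
        Real.log (gammaShapeRateDensity γ b x / g3pDensity γ a b x))
      (fun x => (L * ((-b) ^ (γ + 1) / (γ ! : ℝ))) * (x ^ γ * Real.exp (-(-b * x)))
        + (a ^ 2 * ((-b) ^ (γ + 1) / (γ ! : ℝ))) * (x ^ (γ + 2) * Real.exp (-(-b * x))))
      (Set.Ioi 0) := by
    intro x hx
    dsimp only
    have hx0 : (0:ℝ) < x := hx
    have hratio : gammaShapeRateDensity γ b x / g3pDensity γ a b x
        = (g3pNorm γ a b * ((-b) ^ (γ + 1) / (γ ! : ℝ))) * Real.exp (a ^ 2 * x ^ 2) := by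
      rw [g3pDensity, div_div_eq_mul_div, g3pKernel, gammaShapeRateDensity,
        div_eq_iff (by positivity : x ^ γ * Real.exp (-a ^ 2 * x ^ 2 + b * x) ≠ 0)]
      have hexp : Real.exp (b * x)
          = Real.exp (a ^ 2 * x ^ 2) * Real.exp (-a ^ 2 * x ^ 2 + b * x) := by
        rw [← Real.exp_add]; ring_nf
      rw [hexp]; ring
    show gammaShapeRateDensity γ b x *
        Real.log (gammaShapeRateDensity γ b x / g3pDensity γ a b x) = _
    rw [hratio, Real.log_mul (by positivity) (Real.exp_pos _).ne', Real.log_exp, ← hL,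
      gammaShapeRateDensity, show -(-b * x) = b * x by ring, pow_add]
    ring
  rw [setIntegral_congr_fun measurableSet_Ioi hstep,
    integral_add ((intOn_pow_exp γ hc).const_mul _) ((intOn_pow_exp (γ + 2) hc).const_mul _),
    integral_const_mul, integral_const_mul, int_pow_exp γ hc, int_pow_exp (γ + 2) hc]
  have hbne : b ≠ 0 := hb.ne
  have hcne : (-b : ℝ) ≠ 0 := hc.ne'
  field_simp
  ring

open Nat in
/-- Proposition 2: the KL divergence between `G3p(γ,αₙ,βₙ)` and the Gamma distribution
with shape `γ+1` and rate `−βₙ` goes to zero when `βₙ/αₙ → −∞`. -/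
theorem kl_gamma_g3p_tendsto_zero (γ : ℕ) (hγ : 0 < γ) (α β : ℕ → ℝ)
    (hα : ∀ n, 0 < α n) (hβ : ∀ n, β n < 0)
    (hlim : Tendsto (fun n => β n / α n) atTop atBot) :
    Tendsto (fun n => ∫ x in Set.Ioi (0 : ℝ),
        gammaShapeRateDensity γ (β n) x *
          Real.log (gammaShapeRateDensity γ (β n) x / g3pDensity γ (α n) (β n) x))
      atTop (nhds 0) := by
  set K : ℝ := ((γ + 2)! : ℝ) / (γ ! : ℝ) with hK
  have hfac : (0:ℝ) < (γ ! : ℝ) := by exact_mod_cast Nat.factorial_pos γ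
  have hKpos : 0 < K := by
    rw [hK]; positivity
  set E : ℕ → ℝ := fun n =>
    g3pNorm γ (α n) (β n) * ((-(β n)) ^ (γ + 1) / (γ ! : ℝ)) with hE
  have hrw : ∀ n, (∫ x in Set.Ioi (0:ℝ), gammaShapeRateDensity γ (β n) x *
      Real.log (gammaShapeRateDensity γ (β n) x / g3pDensity γ (α n) (β n) x))
      = Real.log (E n) + K * (α n / β n) ^ 2 := fun n => kl_eq γ (α n) (hβ n)
  simp only [hrw]
  -- the ratio squared tends to 0
  have hu : Tendsto (fun n => (α n / β n) ^ 2) atTop (nhds 0) := by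
    have hsq : Tendsto (fun n => (β n / α n) * (β n / α n)) atTop atTop :=
      hlim.atBot_mul_atBot₀ hlim
    have h0 := hsq.inv_tendsto_atTop
    refine h0.congr (fun n => ?_)
    simp only [Pi.inv_apply]
    rw [mul_inv, inv_div, ← sq]
  -- E n → 1 by squeeze
  have hEtend : Tendsto E atTop (nhds 1) := by
    have hlow : Tendsto (fun n => 1 - K * (α n / β n) ^ 2) atTop (nhds 1) := by
      have := tendsto_const_nhds (x := (1:ℝ)) (f := atTop (α := ℕ))
      simpa using this.sub (tendsto_const_nhds.mul hu)
    refine tendsto_of_tendsto_of_tendsto_of_le_of_le hlow tendsto_const_nhds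
      (fun n => ?_) (fun n => ?_)
    · -- lower bound
      have hc : (0:ℝ) < -(β n) := neg_pos.2 (hβ n)
      have hmul := mul_le_mul_of_nonneg_right (le_norm γ (α n) (hβ n))
        (by positivity : (0:ℝ) ≤ (-(β n)) ^ (γ + 1) / (γ ! : ℝ))
      refine le_trans (le_of_eq ?_) hmul
      have hbne : β n ≠ 0 := (hβ n).ne
      have hcne : (-(β n) : ℝ) ≠ 0 := hc.ne'
      rw [hK]
      field_simp
      ring
    · -- upper bound
      have hc : (0:ℝ) < -(β n) := neg_pos.2 (hβ n)
      have hmul := mul_le_mul_of_nonneg_right (norm_le γ (α n) (hβ n))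
        (by positivity : (0:ℝ) ≤ (-(β n)) ^ (γ + 1) / (γ ! : ℝ))
      refine le_trans hmul (le_of_eq ?_)
      have hcne : (-(β n) : ℝ) ≠ 0 := hc.ne'
      field_simp
  have hlog : Tendsto (fun n => Real.log (E n)) atTop (nhds 0) := by
    have := (Real.continuousAt_log one_ne_zero).tendsto.comp hEtend
    simpa [Function.comp_def] using this
  have hmul : Tendsto (fun n => K * (α n / β n) ^ 2) atTop (nhds (K * 0)) :=
    tendsto_const_nhds.mul hu
  have := hlog.add hmul
  simpa using this
end

section
/- Let γ be a positive integer, α > 0, β ∈ ℝ, and d > 0, c > 0. Let N = ∫₀^∞ x^γ e^{−α²x² + βx} dx, let q(x) = x^γ e^{−α²x² + βx}/N be the three-parameter Gamma density G3p(γ,α,β) on (0,∞), and let p(x) = (c^d/Γ(d)) x^{d−1} e^{−cx} be the Gamma(d,c) density on (0,∞). Then ∫₀^∞ p(x) log(p(x)/q(x)) dx = (γ+1) log c + (d−1−γ)·Γ′(d)/Γ(d) − d − log Γ(d) + α² d(d+1)/c² − β d/c + log N. -/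
open MeasureTheory

section AuxKL
open Set Filter Complex

private lemma aux_gamma_log (d : ℝ) (hd : 0 < d) :
    MeasureTheory.IntegrableOn (fun t : ℝ => t ^ (d-1) * Real.exp (-t) * Real.log t)
      (Set.Ioi 0) ∧
    deriv Real.Gamma d = ∫ t in Set.Ioi (0:ℝ), t ^ (d-1) * Real.exp (-t) * Real.log t := by
  have key := mellin_hasDerivAt_of_isBigO_rpow (E := ℂ) (f := fun x : ℝ => (Real.exp (-x) : ℂ))
    (s := (d:ℂ)) (a := d+1) (b := 0)
    (by refine (Continuous.continuousOn ?_).locallyIntegrableOn measurableSet_Ioi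
        exact Complex.continuous_ofReal.comp (Real.continuous_exp.comp continuous_neg))
    (by rw [← Asymptotics.isBigO_norm_left]
        simp_rw [Complex.norm_real,
          Asymptotics.isBigO_norm_left]
        simpa only [neg_one_mul] using
          (isLittleO_exp_neg_mul_rpow_atTop zero_lt_one _).isBigO)
    (by simp only [Complex.ofReal_re]; linarith)
    (by simp_rw [neg_zero, Real.rpow_zero]
        refine Asymptotics.isBigO_const_of_tendsto (?_ : Tendsto _ _ (nhds (1 : ℂ))) one_ne_zero
        rw [(by simp : (1:ℂ) = Real.exp (-0))]
        exact (continuous_ofReal.comp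
          (Real.continuous_exp.comp continuous_neg)).continuousWithinAt)
    (by simpa using hd)
  have hco : ∀ t ∈ Set.Ioi (0:ℝ), (((t ^ (d-1) * Real.exp (-t) * Real.log t : ℝ)) : ℂ)
      = (t : ℂ) ^ ((d:ℂ) - 1) * ((Real.log t : ℂ) * (Real.exp (-t) : ℂ)) := by
    intro t ht
    rw [show ((d:ℂ) - 1) = ((d - 1 : ℝ) : ℂ) by push_cast; ring,
      ← Complex.ofReal_cpow (le_of_lt ht)]
    push_cast
    ring
  constructor
  · have h1 := key.1
    simp only [MellinConvergent, smul_eq_mul, Complex.real_smul] at h1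
    have h2 : MeasureTheory.IntegrableOn
        (fun t : ℝ => ((t : ℂ) ^ ((d:ℂ) - 1) * ((Real.log t : ℂ) * (Real.exp (-t) : ℂ))).re)
        (Set.Ioi 0) := h1.re
    refine (MeasureTheory.IntegrableOn.congr_fun h2 ?_ measurableSet_Ioi)
    intro t ht
    simp only [← hco t ht, Complex.ofReal_re]
  · have hmel : mellin (fun t : ℝ => Real.log t • (Real.exp (-t) : ℂ)) (d : ℂ)
        = ((∫ t in Set.Ioi (0:ℝ), t ^ (d-1) * Real.exp (-t) * Real.log t : ℝ) : ℂ) := by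
      rw [mellin]
      simp only [smul_eq_mul, Complex.real_smul]
      rw [setIntegral_congr_fun measurableSet_Ioi
        (fun t ht => (hco t ht).symm :
          Set.EqOn (fun t : ℝ => (t : ℂ) ^ ((d:ℂ) - 1) * ((Real.log t : ℂ) * (Real.exp (-t) : ℂ)))
            (fun t : ℝ => ((t ^ (d-1) * Real.exp (-t) * Real.log t : ℝ) : ℂ)) (Set.Ioi 0))]
      exact integral_ofReal
    have hG : HasDerivAt Complex.Gamma
        ((( ∫ t in Set.Ioi (0:ℝ), t ^ (d-1) * Real.exp (-t) * Real.log t : ℝ)) : ℂ) (d : ℂ) := by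
      have h2 := key.2
      rw [← Complex.GammaIntegral_eq_mellin, hmel] at h2
      refine h2.congr_of_eventuallyEq ?_
      refine Filter.eventuallyEq_of_mem (?_ : {s : ℂ | 0 < s.re} ∈ nhds (d:ℂ)) ?_
      · exact (isOpen_lt continuous_const Complex.continuous_re).mem_nhds (by simpa using hd)
      · exact fun s hs => Complex.Gamma_eq_integral hs
    have := hG.real_of_complex
    simp only [Complex.ofReal_re] at this
    have heq : (fun x : ℝ => (Complex.Gamma (x:ℂ)).re) = Real.Gamma := by
      funext x; rw [Complex.Gamma_ofReal]; simp
    rw [heq] at this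
    exact this.deriv

private lemma aux_Ip (d c : ℝ) (hd : 0 < d) (hc : 0 < c) :
    MeasureTheory.IntegrableOn (fun x : ℝ => x ^ (d-1) * Real.exp (-(c*x))) (Set.Ioi 0) := by
  have h := Real.GammaIntegral_convergent hd
  rw [show (0:ℝ) = c * 0 by ring] at h
  have h2 := (integrableOn_Ioi_comp_mul_left_iff (fun x => Real.exp (-x) * x ^ (d-1)) 0 hc).2 h
  have h3 := h2.const_mul (c ^ (1-d))
  refine MeasureTheory.IntegrableOn.congr_fun h3 ?_ measurableSet_Ioi
  intro x hx
  have hx0 : (0:ℝ) < x := hx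
  simp only
  rw [Real.mul_rpow hc.le hx0.le, ← mul_assoc, mul_comm (c^(1-d)) (Real.exp _), mul_assoc,
    ← mul_assoc (c^(1-d)), ← Real.rpow_add hc]
  norm_num
  ring

private lemma aux_N_integrable (γ : ℕ) (α β : ℝ) (hα : 0 < α) :
    MeasureTheory.IntegrableOn (fun x : ℝ => x ^ γ * Real.exp (-α^2*x^2 + β*x)) (Set.Ioi 0) := by
  have hb : (0:ℝ) < α^2/2 := by positivity
  have hint := (integrable_rpow_mul_exp_neg_mul_sq hb (s := (γ:ℝ))
    (lt_of_lt_of_le neg_one_lt_zero (Nat.cast_nonneg γ))).const_mul (Real.exp (β^2/(2*α^2)))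
  refine MeasureTheory.Integrable.mono' hint.integrableOn ?_ ?_
  · exact (((continuous_pow γ).mul (by continuity)).aestronglyMeasurable).restrict
  · filter_upwards [self_mem_ae_restrict measurableSet_Ioi] with x hx
    have hx0 : (0:ℝ) < x := hx
    rw [Real.norm_eq_abs, _root_.abs_of_nonneg (by positivity), Real.rpow_natCast]
    rw [show Real.exp (β^2/(2*α^2)) * (x ^ γ * Real.exp (-(α^2/2) * x^2))
        = x ^ γ * (Real.exp (β^2/(2*α^2)) * Real.exp (-(α^2/2) * x^2)) by ring,
      ← Real.exp_add]
    refine mul_le_mul_of_nonneg_left (Real.exp_le_exp.2 ?_) (by positivity)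
    rw [← sub_nonneg]
    have hkey : β^2/(2*α^2) + -(α^2/2)*x^2 - (-α^2*x^2+β*x) = (β - α^2*x)^2/(2*α^2) := by
      field_simp
      ring
    rw [hkey]
    positivity

private lemma aux_N_pos (γ : ℕ) (α β : ℝ) (hα : 0 < α) :
    0 < ∫ x in Set.Ioi (0:ℝ), x ^ γ * Real.exp (-α^2*x^2 + β*x) := by
  rw [setIntegral_pos_iff_support_of_nonneg_ae]
  · have : (Function.support fun x : ℝ => x ^ γ * Real.exp (-α^2*x^2 + β*x)) ∩ Set.Ioi 0
        = Set.Ioi 0 := by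
      rw [Set.inter_eq_right]
      intro x hx
      have hx0 : (0:ℝ) < x := hx
      exact Function.mem_support.2 (by positivity)
    rw [this, Real.volume_Ioi]
    simp
  · refine Filter.eventually_of_mem (self_mem_ae_restrict measurableSet_Ioi) ?_
    intro x hx
    have hx0 : (0:ℝ) < x := hx
    positivity
  · exact aux_N_integrable γ α β hα


private lemma aux_log_scaled (d c : ℝ) (hd : 0 < d) (hc : 0 < c) :
    MeasureTheory.IntegrableOn (fun x : ℝ => x ^ (d-1) * Real.exp (-(c*x)) * Real.log x)
      (Set.Ioi 0) ∧
    ∫ x in Set.Ioi (0:ℝ), x ^ (d-1) * Real.exp (-(c*x)) * Real.log x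
      = (1/c) ^ d * (deriv Real.Gamma d - Real.log c * Real.Gamma d) := by
  obtain ⟨hint, hval⟩ := aux_gamma_log d hd
  have h1 : MeasureTheory.IntegrableOn
      (fun x : ℝ => (c*x) ^ (d-1) * Real.exp (-(c*x)) * Real.log (c*x)) (Set.Ioi 0) := by
    refine (integrableOn_Ioi_comp_mul_left_iff
      (fun t : ℝ => t ^ (d-1) * Real.exp (-t) * Real.log t) 0 hc).2 ?_
    rw [mul_zero]
    exact hint
  have hcc : c ^ (1-d) * c ^ (d-1) = 1 := by
    rw [← Real.rpow_add hc]; norm_num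
  have heq : Set.EqOn
      (fun x : ℝ => c ^ (1-d) * ((c*x) ^ (d-1) * Real.exp (-(c*x)) * Real.log (c*x))
        - Real.log c * (x ^ (d-1) * Real.exp (-(c*x))))
      (fun x : ℝ => x ^ (d-1) * Real.exp (-(c*x)) * Real.log x) (Set.Ioi 0) := by
    intro x hx
    have hx0 : (0:ℝ) < x := hx
    simp only
    rw [Real.mul_rpow hc.le hx0.le, Real.log_mul hc.ne' hx0.ne']
    linear_combination (Real.exp (-(c*x)) * x ^ (d-1) * (Real.log c + Real.log x)) * hcc
  have h2 := (h1.const_mul (c ^ (1-d))).sub ((aux_Ip d c hd hc).const_mul (Real.log c))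
  refine ⟨MeasureTheory.IntegrableOn.congr_fun h2 heq measurableSet_Ioi, ?_⟩
  rw [← setIntegral_congr_fun measurableSet_Ioi heq,
    integral_sub (h1.const_mul (c ^ (1-d))) ((aux_Ip d c hd hc).const_mul (Real.log c)),
    MeasureTheory.integral_const_mul, MeasureTheory.integral_const_mul]
  have hi := integral_comp_mul_left_Ioi
    (fun t : ℝ => t ^ (d-1) * Real.exp (-t) * Real.log t) 0 hc
  simp only [mul_zero] at hi
  rw [hi, ← hval, Real.integral_rpow_mul_exp_neg_mul_Ioi hd hc]
  have hpow : c ^ (1-d) * c⁻¹ = (1/c) ^ d := by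
    rw [one_div, Real.inv_rpow hc.le, Real.rpow_sub hc, Real.rpow_one]
    field_simp
  rw [smul_eq_mul]
  linear_combination deriv Real.Gamma d * hpow

end AuxKL

/-- Closed form for the Kullback–Leibler divergence `KL(Gamma(d,c) ∥ G3p(γ,α,β))`. -/
theorem kl_gamma_g3p_closed_form (γ : ℕ) (hγ : 0 < γ) (α β d c : ℝ)
    (hα : 0 < α) (hd : 0 < d) (hc : 0 < c)
    (N : ℝ) (hN : N = ∫ x in Set.Ioi (0 : ℝ), x ^ γ * Real.exp (-α ^ 2 * x ^ 2 + β * x)) :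
    ∫ x in Set.Ioi (0 : ℝ),
        (c ^ d / Real.Gamma d * x ^ (d - 1) * Real.exp (-c * x)) *
          Real.log ((c ^ d / Real.Gamma d * x ^ (d - 1) * Real.exp (-c * x)) /
            (x ^ γ * Real.exp (-α ^ 2 * x ^ 2 + β * x) / N)) =
      ((γ : ℝ) + 1) * Real.log c + (d - 1 - γ) * (deriv Real.Gamma d / Real.Gamma d) - d -
        Real.log (Real.Gamma d) + α ^ 2 * d * (d + 1) / c ^ 2 - β * d / c + Real.log N := by
  have hG : 0 < Real.Gamma d := Real.Gamma_pos_of_pos hd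
  have hNpos : 0 < N := hN ▸ aux_N_pos γ α β hα
  have I0 := aux_Ip d c hd hc
  have I1 := aux_Ip (d+1) c (by linarith) hc
  have I2 := aux_Ip (d+2) c (by linarith) hc
  obtain ⟨IL, VL⟩ := aux_log_scaled d c hd hc
  set K : ℝ := c ^ d / Real.Gamma d with hK
  set A : ℝ := d * Real.log c - Real.log (Real.Gamma d) + Real.log N with hA
  have hcong : Set.EqOn
      (fun x : ℝ => (c ^ d / Real.Gamma d * x ^ (d - 1) * Real.exp (-c * x)) *
          Real.log ((c ^ d / Real.Gamma d * x ^ (d - 1) * Real.exp (-c * x)) /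
            (x ^ γ * Real.exp (-α ^ 2 * x ^ 2 + β * x) / N)))
      (fun x : ℝ => (K*A) * (x ^ (d-1) * Real.exp (-(c*x)))
          + (K*(d-1-γ)) * (x ^ (d-1) * Real.exp (-(c*x)) * Real.log x)
          + (K*α^2) * (x ^ (d+2-1) * Real.exp (-(c*x)))
          - (K*(β+c)) * (x ^ (d+1-1) * Real.exp (-(c*x)))) (Set.Ioi 0) := by
    intro x hx
    have hx0 : (0:ℝ) < x := hx
    simp only
    have hlog : Real.log ((c ^ d / Real.Gamma d * x ^ (d - 1) * Real.exp (-c * x)) /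
            (x ^ γ * Real.exp (-α ^ 2 * x ^ 2 + β * x) / N))
        = (d * Real.log c - Real.log (Real.Gamma d) + (d-1) * Real.log x + (-c * x))
          - ((γ:ℝ) * Real.log x + (-α ^ 2 * x ^ 2 + β * x) - Real.log N) := by
      rw [Real.log_div (by positivity) (by positivity),
          Real.log_mul (by positivity) (Real.exp_ne_zero _),
          Real.log_mul (by positivity) (by positivity),
          Real.log_div (by positivity) hG.ne',
          Real.log_rpow hc, Real.log_rpow hx0, Real.log_exp,
          Real.log_div (by positivity) hNpos.ne',
          Real.log_mul (by positivity) (Real.exp_ne_zero _),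
          Real.log_pow, Real.log_exp]
    rw [hlog]
    have hx1 : x ^ (d+1-1) = x ^ (d-1) * x := by
      rw [show d+1-1 = (d-1)+1 by ring, Real.rpow_add hx0, Real.rpow_one]
    have hx2 : x ^ (d+2-1) = x ^ (d-1) * x^2 := by
      rw [show d+2-1 = (d-1)+2 by ring, Real.rpow_add hx0]
      norm_num
    rw [hx1, hx2, hK, hA, neg_mul]
    ring
  have J0 : MeasureTheory.IntegrableOn
      (fun x : ℝ => (K*A) * (x ^ (d-1) * Real.exp (-(c*x)))) (Set.Ioi 0) := I0.const_mul _
  have JL : MeasureTheory.IntegrableOn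
      (fun x : ℝ => (K*(d-1-γ)) * (x ^ (d-1) * Real.exp (-(c*x)) * Real.log x)) (Set.Ioi 0) :=
    IL.const_mul _
  have J2 : MeasureTheory.IntegrableOn
      (fun x : ℝ => (K*α^2) * (x ^ (d+2-1) * Real.exp (-(c*x)))) (Set.Ioi 0) := I2.const_mul _
  have J1 : MeasureTheory.IntegrableOn
      (fun x : ℝ => (K*(β+c)) * (x ^ (d+1-1) * Real.exp (-(c*x)))) (Set.Ioi 0) := I1.const_mul _
  have S1 : MeasureTheory.IntegrableOn
      (fun x : ℝ => (K*A) * (x ^ (d-1) * Real.exp (-(c*x)))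
        + (K*(d-1-γ)) * (x ^ (d-1) * Real.exp (-(c*x)) * Real.log x)) (Set.Ioi 0) := J0.add JL
  have S2 : MeasureTheory.IntegrableOn
      (fun x : ℝ => (K*A) * (x ^ (d-1) * Real.exp (-(c*x)))
        + (K*(d-1-γ)) * (x ^ (d-1) * Real.exp (-(c*x)) * Real.log x)
        + (K*α^2) * (x ^ (d+2-1) * Real.exp (-(c*x)))) (Set.Ioi 0) := S1.add J2
  rw [setIntegral_congr_fun measurableSet_Ioi hcong,
    integral_sub S2 J1, integral_add S1 J2, integral_add J0 JL,
    MeasureTheory.integral_const_mul, MeasureTheory.integral_const_mul,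
    MeasureTheory.integral_const_mul, MeasureTheory.integral_const_mul,
    VL, Real.integral_rpow_mul_exp_neg_mul_Ioi hd hc,
    Real.integral_rpow_mul_exp_neg_mul_Ioi (show (0:ℝ) < d+1 by linarith) hc,
    Real.integral_rpow_mul_exp_neg_mul_Ioi (show (0:ℝ) < d+2 by linarith) hc]
  have g1 : Real.Gamma (d+1) = d * Real.Gamma d := Real.Gamma_add_one hd.ne'
  have g2 : Real.Gamma (d+2) = (d+1) * (d * Real.Gamma d) := by
    rw [show d+2 = (d+1)+1 by ring, Real.Gamma_add_one (by positivity), g1]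
  have e1 : (1/c) ^ (d+1) = (1/c) ^ d * (1/c) := by
    rw [Real.rpow_add (by positivity), Real.rpow_one]
  have e2 : (1/c) ^ (d+2) = (1/c) ^ d * (1/c^2) := by
    rw [Real.rpow_add (by positivity)]
    congr 1
    rw [show (2:ℝ) = ((2:ℕ):ℝ) by norm_num, Real.rpow_natCast, div_pow, one_pow]
  have e0 : ((1:ℝ)/c) ^ d = (c ^ d)⁻¹ := by
    rw [one_div, Real.inv_rpow hc.le]
  rw [g1, g2, e1, e2, e0, hK, hA]
  have hP : (0:ℝ) < c ^ d := Real.rpow_pos_of_pos hc d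
  field_simp
  ring
end

section
/- For every real ν > 0, lim_{z → −∞} [∫₀^∞ t^{ν} e^{−t²/2 − zt} dt] / [(−z) · ∫₀^∞ t^{ν−1} e^{−t²/2 − zt} dt] = 1. -/
open MeasureTheory Filter

section PcirAux

open Set Real

private lemma pcir_integrable (p s : ℝ) (hp : -1 < p) :
    IntegrableOn (fun t : ℝ => t ^ p * Real.exp (-t ^ 2 / 2 + s * t)) (Set.Ioi 0) := by
  have base : IntegrableOn
      (fun t : ℝ => Real.exp (s ^ 2) * (t ^ p * Real.exp (-(1/4 : ℝ) * t ^ 2)))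
      (Set.Ioi 0) :=
    (integrableOn_rpow_mul_exp_neg_mul_sq (by norm_num) hp).const_mul _
  refine Integrable.mono' base ?_ ?_
  · apply Measurable.aestronglyMeasurable
    fun_prop
  · rw [ae_restrict_iff' measurableSet_Ioi]
    refine Filter.Eventually.of_forall fun t ht => ?_
    have ht0 : (0:ℝ) < t := ht
    have h1 : 0 ≤ t ^ p * Real.exp (-t ^ 2 / 2 + s * t) :=
      mul_nonneg (Real.rpow_nonneg ht0.le _) (Real.exp_pos _).le
    rw [Real.norm_eq_abs, abs_of_nonneg h1]
    have h2 : Real.exp (-t ^ 2 / 2 + s * t) ≤ Real.exp (s ^ 2) * Real.exp (-(1/4:ℝ) * t ^ 2) := by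
      rw [← Real.exp_add]
      exact Real.exp_le_exp.mpr (by nlinarith [sq_nonneg (s - t / 2), sq_nonneg t])
    calc t ^ p * Real.exp (-t ^ 2 / 2 + s * t)
        ≤ t ^ p * (Real.exp (s ^ 2) * Real.exp (-(1/4:ℝ) * t ^ 2)) :=
          mul_le_mul_of_nonneg_left h2 (Real.rpow_nonneg ht0.le _)
      _ = Real.exp (s ^ 2) * (t ^ p * Real.exp (-(1/4:ℝ) * t ^ 2)) := by ring

private lemma pcir_nonneg_ae (p s : ℝ) (S : Set ℝ) (hS : MeasurableSet S) (hS' : S ⊆ Set.Ioi 0) :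
    0 ≤ᵐ[volume.restrict S] fun t : ℝ => t ^ p * Real.exp (-t ^ 2 / 2 + s * t) := by
  rw [EventuallyLE, ae_restrict_iff' hS]
  refine Filter.Eventually.of_forall fun t ht => ?_
  have ht0 : (0:ℝ) < t := hS' ht
  exact mul_nonneg (Real.rpow_nonneg ht0.le _) (Real.exp_pos _).le

private lemma pcir_B_lb (ν : ℝ) (hν : 0 < ν) (s : ℝ) (hs : 1 ≤ s) :
    s ^ ν / (s + 1) * Real.exp ((s ^ 2 - 1) / 2) ≤
      ∫ t in Set.Ioi (0:ℝ), t ^ (ν - 1) * Real.exp (-t ^ 2 / 2 + s * t) := by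
  have h0s : (0:ℝ) < s := lt_of_lt_of_le one_pos hs
  have hν1 : (-1:ℝ) < ν - 1 := by linarith
  have hsub : Set.Ioc s (s + 1) ⊆ Set.Ioi (0:ℝ) := fun t ht => h0s.trans ht.1
  have hint := pcir_integrable (ν - 1) s hν1
  have step1 : ∫ t in Set.Ioc s (s+1), t ^ (ν-1) * Real.exp (-t ^ 2 / 2 + s * t) ≤
      ∫ t in Set.Ioi (0:ℝ), t ^ (ν-1) * Real.exp (-t ^ 2 / 2 + s * t) :=
    setIntegral_mono_set hint (pcir_nonneg_ae _ _ _ measurableSet_Ioi (subset_refl _))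
      (HasSubset.Subset.eventuallyLE hsub)
  refine le_trans ?_ step1
  have hvol : (volume (Set.Ioc s (s+1))).toReal = 1 := by
    rw [Real.volume_Ioc]; simp
  have step2 := setIntegral_ge_of_const_le (μ := volume)
      (c := s ^ ν / (s + 1) * Real.exp ((s ^ 2 - 1) / 2)) measurableSet_Ioc
      (by rw [Real.volume_Ioc]; exact ENNReal.ofReal_ne_top)
      (fun t ht => ?_) (hint.mono_set hsub)
  · rw [measureReal_def, hvol, one_smul] at step2; exact step2
  · have ht0 : (0:ℝ) < t := h0s.trans ht.1
    have h1 : s ^ ν / (s + 1) ≤ t ^ (ν - 1) := by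
      rw [Real.rpow_sub ht0, Real.rpow_one]
      exact div_le_div₀ (Real.rpow_nonneg ht0.le _)
        (Real.rpow_le_rpow h0s.le ht.1.le hν.le) ht0 ht.2
    have h2 : Real.exp ((s ^ 2 - 1) / 2) ≤ Real.exp (-t ^ 2 / 2 + s * t) := by
      apply Real.exp_le_exp.mpr
      nlinarith [mul_nonneg (sub_nonneg.mpr ht.1.le) (sub_nonneg.mpr ht.2)]
    exact mul_le_mul h1 h2 (Real.exp_pos _).le (Real.rpow_nonneg ht0.le _)

private lemma pcir_L_ub (ν : ℝ) (hν : 0 < ν) (δ s : ℝ) (hδ0 : 0 < δ) (hδ1 : δ < 1)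
    (hs : 1 ≤ s) :
    ∫ t in Set.Ioc (0:ℝ) ((1 - δ) * s), t ^ (ν - 1) * Real.exp (-t ^ 2 / 2 + s * t) ≤
      s ^ ν / ν * Real.exp ((1 - δ ^ 2) * s ^ 2 / 2) := by
  have h0s : (0:ℝ) < s := lt_of_lt_of_le one_pos hs
  have hν1 : (-1:ℝ) < ν - 1 := by linarith
  set a : ℝ := (1 - δ) * s with ha
  have ha0 : 0 < a := mul_pos (by linarith) h0s
  set K : ℝ := Real.exp ((1 - δ ^ 2) * s ^ 2 / 2) with hK
  have hrpow_int : IntegrableOn (fun t : ℝ => t ^ (ν - 1)) (Set.Ioc 0 a) :=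
    (intervalIntegral.intervalIntegrable_rpow' hν1).1
  have step1 : ∫ t in Set.Ioc (0:ℝ) a, t ^ (ν - 1) * Real.exp (-t ^ 2 / 2 + s * t) ≤
      ∫ t in Set.Ioc (0:ℝ) a, t ^ (ν - 1) * K := by
    refine setIntegral_mono_on
      ((pcir_integrable (ν - 1) s hν1).mono_set Set.Ioc_subset_Ioi_self)
      (hrpow_int.mul_const K) measurableSet_Ioc fun t ht => ?_
    have ht0 : (0:ℝ) < t := ht.1
    refine mul_le_mul_of_nonneg_left ?_ (Real.rpow_nonneg ht0.le _)
    refine Real.exp_le_exp.mpr ?_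
    have h1 : δ * s ≤ s - t := by nlinarith [ht.2]
    have h2 : (δ * s) ^ 2 ≤ (s - t) ^ 2 := by
      apply pow_le_pow_left₀ (by positivity) h1
    nlinarith [h2]
  refine le_trans step1 ?_
  rw [integral_mul_const]
  have hval : ∫ t in Set.Ioc (0:ℝ) a, t ^ (ν - 1) = a ^ ν / ν := by
    rw [← intervalIntegral.integral_of_le ha0.le,
      integral_rpow (Or.inl hν1)]
    rw [sub_add_cancel, Real.zero_rpow hν.ne', sub_zero]
  rw [hval]
  have haν : a ^ ν ≤ s ^ ν :=
    Real.rpow_le_rpow ha0.le (by nlinarith) hν.le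
  have : a ^ ν / ν ≤ s ^ ν / ν := by gcongr
  exact mul_le_mul_of_nonneg_right this (Real.exp_pos _).le

private lemma pcir_T_ub (ν : ℝ) (hν : 0 < ν) (δ s : ℝ) (hδ0 : 0 < δ) (hδ1 : δ < 1)
    (hs : 1 ≤ s) :
    ∫ t in Set.Ioi ((1 + δ) * s), t ^ ν * Real.exp (-t ^ 2 / 2 + s * t) ≤
      (∫ t in Set.Ioi (0:ℝ), t ^ ν * Real.exp (-(δ ^ 2 / (4 * (1 + δ) ^ 2)) * t ^ 2)) *
        Real.exp (s ^ 2 / 2 - δ ^ 2 * s ^ 2 / 4) := by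
  have h0s : (0:ℝ) < s := lt_of_lt_of_le one_pos hs
  have hνm : (-1:ℝ) < ν := by linarith
  set c : ℝ := δ ^ 2 / (4 * (1 + δ) ^ 2) with hc
  have hc0 : 0 < c := by positivity
  set b : ℝ := (1 + δ) * s with hb
  have hb0 : 0 < b := by positivity
  have hbsub : Set.Ioi b ⊆ Set.Ioi (0:ℝ) := Set.Ioi_subset_Ioi hb0.le
  set K : ℝ := Real.exp (s ^ 2 / 2 - δ ^ 2 * s ^ 2 / 4) with hKdef
  have hgint : IntegrableOn (fun t : ℝ => t ^ ν * Real.exp (-c * t ^ 2)) (Set.Ioi 0) :=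
    integrableOn_rpow_mul_exp_neg_mul_sq hc0 hνm
  have step1 : ∫ t in Set.Ioi b, t ^ ν * Real.exp (-t ^ 2 / 2 + s * t) ≤
      ∫ t in Set.Ioi b, (t ^ ν * Real.exp (-c * t ^ 2)) * K := by
    refine setIntegral_mono_on ((pcir_integrable ν s hνm).mono_set hbsub)
      ((hgint.mono_set hbsub).mul_const K) measurableSet_Ioi fun t ht => ?_
    have ht0 : (0:ℝ) < t := hb0.trans ht
    have htb : b < t := ht
    rw [mul_assoc]
    refine mul_le_mul_of_nonneg_left ?_ (Real.rpow_nonneg ht0.le _)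
    rw [← Real.exp_add]
    refine Real.exp_le_exp.mpr ?_
    -- - t^2/2 + s t ≤ -c t^2 + (s^2/2 - δ^2 s^2/4)
    have h1 : δ * s ≤ t - s := by nlinarith
    have h2 : δ * t ≤ (1 + δ) * (t - s) := by nlinarith
    have h3 : (δ * s) ^ 2 ≤ (t - s) ^ 2 := pow_le_pow_left₀ (by positivity) h1 2
    have h4 : (δ * t) ^ 2 ≤ ((1 + δ) * (t - s)) ^ 2 :=
      pow_le_pow_left₀ (by positivity) h2 2
    have h6 : c * t ^ 2 ≤ (t - s) ^ 2 / 4 := by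
      rw [hc, div_mul_eq_mul_div, div_le_div_iff₀ (by positivity) (by norm_num)]
      nlinarith [h4]
    nlinarith [h3, h6]
  refine le_trans step1 ?_
  rw [integral_mul_const]
  refine mul_le_mul_of_nonneg_right ?_ (Real.exp_pos _).le
  refine setIntegral_mono_set hgint ?_ (HasSubset.Subset.eventuallyLE hbsub)
  rw [EventuallyLE, ae_restrict_iff' measurableSet_Ioi]
  refine Filter.Eventually.of_forall fun t ht => ?_
  exact mul_nonneg (Real.rpow_nonneg (le_of_lt ht) _) (Real.exp_pos _).le

private lemma pcir_tendsto_aux (c K : ℝ) (hc : 0 < c) :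
    Filter.Tendsto (fun s : ℝ => K * ((s + 1) * Real.exp (-(c * s ^ 2)))) atTop (nhds 0) := by
  have h1 : Filter.Tendsto (fun s : ℝ => (s + 1) * Real.exp (-(c * s ^ 2))) atTop (nhds 0) := by
    have hx : Filter.Tendsto (fun x : ℝ => x * Real.exp (-x)) atTop (nhds 0) := by
      simpa using Real.tendsto_pow_mul_exp_neg_atTop_nhds_zero 1
    have hcs : Filter.Tendsto (fun s : ℝ => c * s) atTop atTop :=
      Filter.Tendsto.const_mul_atTop hc tendsto_id
    have hg : Filter.Tendsto (fun s : ℝ => (2 / c) * ((c * s) * Real.exp (-(c * s))))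
        atTop (nhds 0) := by
      have := (hx.comp hcs).const_mul (2 / c)
      simpa [Function.comp] using this
    refine squeeze_zero' ?_ ?_ hg
    · filter_upwards [eventually_ge_atTop (1:ℝ)] with s hs
      have : (0:ℝ) ≤ s + 1 := by linarith
      positivity
    · filter_upwards [eventually_ge_atTop (1:ℝ)] with s hs
      have hss : s ≤ s ^ 2 := by nlinarith
      have hexp : Real.exp (-(c * s ^ 2)) ≤ Real.exp (-(c * s)) :=
        Real.exp_le_exp.mpr (by nlinarith [mul_le_mul_of_nonneg_left hss hc.le])
      calc (s + 1) * Real.exp (-(c * s ^ 2)) ≤ (2 * s) * Real.exp (-(c * s)) :=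
            mul_le_mul (by linarith) hexp (Real.exp_pos _).le (by linarith)
        _ = (2 / c) * ((c * s) * Real.exp (-(c * s))) := by field_simp
  simpa using h1.const_mul K

private lemma pcir_final (δ s A B L T : ℝ) (hδ0 : 0 < δ) (hδ1 : δ < 1) (hs1 : 1 ≤ s)
    (h0s : 0 < s) (hB0 : 0 < B) (hLδ : L ≤ δ * B) (hTδ : T ≤ δ * (s * B))
    (hAlow : (1 - δ) * s * (B - L) ≤ A) (hAup : A ≤ (1 + δ) * s * B + T) :
    1 - 2 * δ ≤ A / (s * B) ∧ A / (s * B) ≤ 1 + 2 * δ := by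
  have hsB : 0 < s * B := mul_pos h0s hB0
  have e1 : (1 - δ) * s * (B - δ * B) ≤ (1 - δ) * s * (B - L) :=
    mul_le_mul_of_nonneg_left (by linarith) (by nlinarith)
  have e2 : (1 - 2 * δ) * (s * B) ≤ (1 - δ) * s * (B - δ * B) := by
    nlinarith [mul_nonneg (mul_nonneg (sq_nonneg δ) h0s.le) hB0.le]
  have key1 : (1 - 2 * δ) * (s * B) ≤ A := le_trans (le_trans e2 e1) hAlow
  have key2 : A ≤ (1 + 2 * δ) * (s * B) := by nlinarith
  exact ⟨(le_div_iff₀ hsB).mpr (by linarith), (div_le_iff₀ hsB).mpr (by linarith)⟩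

private lemma pcir_key (ν : ℝ) (hν : 0 < ν) :
    Filter.Tendsto (fun s : ℝ =>
        (∫ t in Set.Ioi (0:ℝ), t ^ ν * Real.exp (-t ^ 2 / 2 + s * t)) /
          (s * ∫ t in Set.Ioi (0:ℝ), t ^ (ν - 1) * Real.exp (-t ^ 2 / 2 + s * t)))
      atTop (nhds 1) := by
  have hνm : (-1:ℝ) < ν := by linarith
  have hν1 : (-1:ℝ) < ν - 1 := by linarith
  rw [Metric.tendsto_nhds]
  intro ε hε
  set δ : ℝ := min (ε / 4) (1 / 2) with hδdef
  have hδ0 : 0 < δ := lt_min (by linarith) (by norm_num)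
  have hδ1 : δ < 1 := lt_of_le_of_lt (min_le_right _ _) (by norm_num)
  have hδε : δ ≤ ε / 4 := min_le_left _ _
  set c : ℝ := δ ^ 2 / (4 * (1 + δ) ^ 2) with hcdef
  set C : ℝ := ∫ t in Set.Ioi (0:ℝ), t ^ ν * Real.exp (-c * t ^ 2) with hCdef
  have hC0 : 0 ≤ C := setIntegral_nonneg measurableSet_Ioi fun t ht =>
    mul_nonneg (Real.rpow_nonneg (le_of_lt ht) _) (Real.exp_pos _).le
  have hL0 := pcir_tendsto_aux (δ ^ 2 / 2) (Real.exp (1/2) / ν) (by positivity)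
  have hT0 := pcir_tendsto_aux (δ ^ 2 / 4) (C * Real.exp (1/2)) (by positivity)
  filter_upwards [eventually_ge_atTop (1:ℝ), hL0.eventually (gt_mem_nhds hδ0),
    hT0.eventually (gt_mem_nhds hδ0)] with s hs1 hLb hTb
  have h0s : (0:ℝ) < s := lt_of_lt_of_le one_pos hs1
  set A : ℝ := ∫ t in Set.Ioi (0:ℝ), t ^ ν * Real.exp (-t ^ 2 / 2 + s * t) with hAdef
  set B : ℝ := ∫ t in Set.Ioi (0:ℝ), t ^ (ν - 1) * Real.exp (-t ^ 2 / 2 + s * t) with hBdef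
  set Blb : ℝ := s ^ ν / (s + 1) * Real.exp ((s ^ 2 - 1) / 2) with hBlbdef
  have hB : Blb ≤ B := pcir_B_lb ν hν s hs1
  have hBlb0 : 0 < Blb :=
    mul_pos (div_pos (Real.rpow_pos_of_pos h0s ν) (by linarith)) (Real.exp_pos _)
  have hB0 : 0 < B := lt_of_lt_of_le hBlb0 hB
  set a : ℝ := (1 - δ) * s with hadef
  set b : ℝ := (1 + δ) * s with hbdef
  have ha0 : 0 < a := mul_pos (by linarith) h0s
  have hb0 : 0 < b := mul_pos (by linarith) h0s
  set L : ℝ := ∫ t in Set.Ioc (0:ℝ) a, t ^ (ν - 1) * Real.exp (-t ^ 2 / 2 + s * t) with hLdef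
  set T : ℝ := ∫ t in Set.Ioi b, t ^ ν * Real.exp (-t ^ 2 / 2 + s * t) with hTdef
  have Iν := pcir_integrable ν s hνm
  have Iμ := pcir_integrable (ν - 1) s hν1
  -- L ≤ δ B
  have hLub := pcir_L_ub ν hν δ s hδ0 hδ1 hs1
  have hsum : s + 1 ≠ 0 := ne_of_gt (by linarith)
  have heqL : s ^ ν / ν * Real.exp ((1 - δ ^ 2) * s ^ 2 / 2)
      = ((Real.exp (1/2) / ν) * ((s + 1) * Real.exp (-(δ ^ 2 / 2 * s ^ 2)))) * Blb := by
    rw [hBlbdef, show Real.exp ((1 - δ ^ 2) * s ^ 2 / 2)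
        = Real.exp (1/2) * Real.exp (-(δ ^ 2 / 2 * s ^ 2)) * Real.exp ((s ^ 2 - 1) / 2) by
      rw [← Real.exp_add, ← Real.exp_add]; congr 1; ring]
    field_simp
  have hLδ : L ≤ δ * B := by
    calc L ≤ s ^ ν / ν * Real.exp ((1 - δ ^ 2) * s ^ 2 / 2) := hLub
      _ = ((Real.exp (1/2) / ν) * ((s + 1) * Real.exp (-(δ ^ 2 / 2 * s ^ 2)))) * Blb := heqL
      _ ≤ δ * Blb := mul_le_mul_of_nonneg_right hLb.le hBlb0.le
      _ ≤ δ * B := mul_le_mul_of_nonneg_left hB hδ0.le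
  -- T ≤ δ s B
  have hTub := pcir_T_ub ν hν δ s hδ0 hδ1 hs1
  have hsν1 : 1 ≤ s ^ ν := by
    calc (1:ℝ) = 1 ^ ν := (Real.one_rpow ν).symm
      _ ≤ s ^ ν := Real.rpow_le_rpow zero_le_one hs1 hν.le
  have heqT : ((C * Real.exp (1/2)) * ((s + 1) * Real.exp (-(δ ^ 2 / 4 * s ^ 2)))) * (s * Blb)
      = (s * s ^ ν) * (C * Real.exp (s ^ 2 / 2 - δ ^ 2 * s ^ 2 / 4)) := by
    rw [hBlbdef, show Real.exp (s ^ 2 / 2 - δ ^ 2 * s ^ 2 / 4)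
        = Real.exp (1/2) * Real.exp (-(δ ^ 2 / 4 * s ^ 2)) * Real.exp ((s ^ 2 - 1) / 2) by
      rw [← Real.exp_add, ← Real.exp_add]; congr 1; ring]
    field_simp
  have hTδ : T ≤ δ * (s * B) := by
    have hX : 0 ≤ C * Real.exp (s ^ 2 / 2 - δ ^ 2 * s ^ 2 / 4) :=
      mul_nonneg hC0 (Real.exp_pos _).le
    have h1ss : 1 ≤ s * s ^ ν := by nlinarith
    calc T ≤ C * Real.exp (s ^ 2 / 2 - δ ^ 2 * s ^ 2 / 4) := hTub
      _ ≤ (s * s ^ ν) * (C * Real.exp (s ^ 2 / 2 - δ ^ 2 * s ^ 2 / 4)) :=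
          le_mul_of_one_le_left hX h1ss
      _ = ((C * Real.exp (1/2)) * ((s + 1) * Real.exp (-(δ ^ 2 / 4 * s ^ 2)))) * (s * Blb) :=
          heqT.symm
      _ ≤ δ * (s * Blb) :=
          mul_le_mul_of_nonneg_right hTb.le (mul_nonneg h0s.le hBlb0.le)
      _ ≤ δ * (s * B) := by
          refine mul_le_mul_of_nonneg_left ?_ hδ0.le
          exact mul_le_mul_of_nonneg_left hB h0s.le
  -- lower bound on A
  have hBsplit : B = L + ∫ t in Set.Ioi a, t ^ (ν - 1) * Real.exp (-t ^ 2 / 2 + s * t) := by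
    rw [hBdef, hLdef, ← Set.Ioc_union_Ioi_eq_Ioi ha0.le,
      setIntegral_union (Set.Ioc_disjoint_Ioi le_rfl) measurableSet_Ioi
        (Iμ.mono_set Set.Ioc_subset_Ioi_self) (Iμ.mono_set (Set.Ioi_subset_Ioi ha0.le))]
  have h2 : a * ∫ t in Set.Ioi a, t ^ (ν - 1) * Real.exp (-t ^ 2 / 2 + s * t) ≤
      ∫ t in Set.Ioi a, t ^ ν * Real.exp (-t ^ 2 / 2 + s * t) := by
    rw [← integral_const_mul]
    refine setIntegral_mono_on ((Iμ.mono_set (Set.Ioi_subset_Ioi ha0.le)).const_mul a)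
      (Iν.mono_set (Set.Ioi_subset_Ioi ha0.le)) measurableSet_Ioi fun t ht => ?_
    have hat : a < t := ht
    have ht0 : (0:ℝ) < t := ha0.trans hat
    have htν : t * t ^ (ν - 1) = t ^ ν := by
      rw [Real.rpow_sub ht0, Real.rpow_one]
      field_simp
    have hx : 0 ≤ t ^ (ν - 1) * Real.exp (-t ^ 2 / 2 + s * t) :=
      mul_nonneg (Real.rpow_nonneg ht0.le _) (Real.exp_pos _).le
    calc a * (t ^ (ν - 1) * Real.exp (-t ^ 2 / 2 + s * t))
        ≤ t * (t ^ (ν - 1) * Real.exp (-t ^ 2 / 2 + s * t)) :=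
          mul_le_mul_of_nonneg_right hat.le hx
      _ = t ^ ν * Real.exp (-t ^ 2 / 2 + s * t) := by rw [← mul_assoc, htν]
  have h3 : ∫ t in Set.Ioi a, t ^ ν * Real.exp (-t ^ 2 / 2 + s * t) ≤ A :=
    setIntegral_mono_set Iν (pcir_nonneg_ae ν s _ measurableSet_Ioi (subset_refl _))
      (HasSubset.Subset.eventuallyLE (Set.Ioi_subset_Ioi ha0.le))
  have hAlow : a * (B - L) ≤ A := by
    have hBL : B - L = ∫ t in Set.Ioi a, t ^ (ν - 1) * Real.exp (-t ^ 2 / 2 + s * t) := by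
      linarith [hBsplit]
    rw [hBL]; exact le_trans h2 h3
  -- upper bound on A
  have hAsplit : A = (∫ t in Set.Ioc (0:ℝ) b, t ^ ν * Real.exp (-t ^ 2 / 2 + s * t)) + T := by
    rw [hAdef, hTdef, ← Set.Ioc_union_Ioi_eq_Ioi hb0.le,
      setIntegral_union (Set.Ioc_disjoint_Ioi le_rfl) measurableSet_Ioi
        (Iν.mono_set Set.Ioc_subset_Ioi_self) (Iν.mono_set (Set.Ioi_subset_Ioi hb0.le))]
  have h5 : ∫ t in Set.Ioc (0:ℝ) b, t ^ ν * Real.exp (-t ^ 2 / 2 + s * t) ≤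
      b * ∫ t in Set.Ioc (0:ℝ) b, t ^ (ν - 1) * Real.exp (-t ^ 2 / 2 + s * t) := by
    rw [← integral_const_mul]
    refine setIntegral_mono_on (Iν.mono_set Set.Ioc_subset_Ioi_self)
      ((Iμ.mono_set Set.Ioc_subset_Ioi_self).const_mul b) measurableSet_Ioc fun t ht => ?_
    have ht0 : (0:ℝ) < t := ht.1
    have htν : t * t ^ (ν - 1) = t ^ ν := by
      rw [Real.rpow_sub ht0, Real.rpow_one]
      field_simp
    have hx : 0 ≤ t ^ (ν - 1) * Real.exp (-t ^ 2 / 2 + s * t) :=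
      mul_nonneg (Real.rpow_nonneg ht0.le _) (Real.exp_pos _).le
    calc t ^ ν * Real.exp (-t ^ 2 / 2 + s * t)
        = t * (t ^ (ν - 1) * Real.exp (-t ^ 2 / 2 + s * t)) := by rw [← mul_assoc, htν]
      _ ≤ b * (t ^ (ν - 1) * Real.exp (-t ^ 2 / 2 + s * t)) :=
          mul_le_mul_of_nonneg_right ht.2 hx
  have h6 : ∫ t in Set.Ioc (0:ℝ) b, t ^ (ν - 1) * Real.exp (-t ^ 2 / 2 + s * t) ≤ B :=
    setIntegral_mono_set Iμ (pcir_nonneg_ae (ν - 1) s _ measurableSet_Ioi (subset_refl _))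
      (HasSubset.Subset.eventuallyLE Set.Ioc_subset_Ioi_self)
  have hAup : A ≤ b * B + T := by
    have := mul_le_mul_of_nonneg_left h6 hb0.le
    linarith [hAsplit, h5]
  -- conclude
  clear_value A B Blb L T a b δ c C
  rw [hadef] at hAlow
  rw [hbdef] at hAup
  obtain ⟨hdivge, hdivle⟩ := pcir_final δ s A B L T hδ0 hδ1 hs1 h0s hB0 hLδ hTδ hAlow hAup
  rw [Real.dist_eq, abs_lt]
  constructor
  · linarith
  · linarith

end PcirAux

/-- The asymptotics `I_{ν+1}(z) / ((−z)·I_ν(z)) → 1` as `z → −∞`, where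
`I_ν(z) = ∫₀^∞ t^{ν−1} e^{−t²/2 − zt} dt`. -/
theorem parabolic_cylinder_integral_ratio_atBot (ν : ℝ) (hν : 0 < ν) :
    Tendsto (fun z : ℝ =>
        (∫ t in Set.Ioi (0 : ℝ), t ^ ν * Real.exp (-t ^ 2 / 2 - z * t)) /
          ((-z) * ∫ t in Set.Ioi (0 : ℝ), t ^ (ν - 1) * Real.exp (-t ^ 2 / 2 - z * t)))
      atBot (nhds 1) := by
  have key := pcir_key ν hν
  have hneg : Tendsto (fun z : ℝ => -z) atBot atTop := tendsto_neg_atBot_atTop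
  refine (key.comp hneg).congr fun z => ?_
  simp only [Function.comp_apply, sub_eq_add_neg, neg_mul]
end

section
/- Fix a positive integer γ and a real α > 0. For β ∈ ℝ and k = 0, 1, 2 define M_k(β) = ∫₀^∞ x^{γ+k} e^{−α²x² + βx} dx, and set μ(β) = M₁(β)/M₀(β) and σ²(β) = M₂(β)/M₀(β) − μ(β)². Then lim_{β → −∞} μ(β)²/σ²(β) = γ + 1. -/
open MeasureTheory Filter

/-- The `k`-shifted moment integral `M_k(β) = ∫₀^∞ x^{γ+k} e^{−α²x² + βx} dx` of the
three-parameter Gamma kernel. -/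
noncomputable def g3pMoment (γ : ℕ) (α : ℝ) (k : ℕ) (β : ℝ) : ℝ :=
  ∫ x in Set.Ioi (0 : ℝ), x ^ (γ + k) * Real.exp (-α ^ 2 * x ^ 2 + β * x)

/-- The mean `μ(β) = M₁(β)/M₀(β)` of the three-parameter Gamma distribution G3p(γ,α,β). -/
noncomputable def g3pMean (γ : ℕ) (α : ℝ) (β : ℝ) : ℝ :=
  g3pMoment γ α 1 β / g3pMoment γ α 0 β

/-- The variance `σ²(β) = M₂(β)/M₀(β) − μ(β)²` of the three-parameter Gamma distribution. -/
noncomputable def g3pVar (γ : ℕ) (α : ℝ) (β : ℝ) : ℝ :=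
  g3pMoment γ α 2 β / g3pMoment γ α 0 β - (g3pMean γ α β) ^ 2

lemma polyExp_integrable (n : ℕ) :
    IntegrableOn (fun t : ℝ => t ^ n * Real.exp (-t)) (Set.Ioi 0) := by
  have h := Real.GammaIntegral_convergent (s := (n : ℝ) + 1) (by positivity)
  refine h.congr_fun ?_ measurableSet_Ioi
  intro x hx
  rw [Set.mem_Ioi] at hx
  show Real.exp (-x) * x ^ ((n : ℝ) + 1 - 1) = x ^ n * Real.exp (-x)
  rw [add_sub_cancel_right, Real.rpow_natCast, mul_comm]

lemma polyExp_integral (n : ℕ) :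
    ∫ t in Set.Ioi (0:ℝ), t ^ n * Real.exp (-t) = (Nat.factorial n : ℝ) := by
  have h1 : (0:ℝ) < (n : ℝ) + 1 := by positivity
  have h2 := Real.Gamma_eq_integral h1
  rw [Real.Gamma_nat_eq_factorial] at h2
  rw [h2]
  apply setIntegral_congr_fun measurableSet_Ioi
  intro x hx
  rw [Set.mem_Ioi] at hx
  show x ^ n * Real.exp (-x) = Real.exp (-x) * x ^ ((n : ℝ) + 1 - 1)
  rw [add_sub_cancel_right, Real.rpow_natCast, mul_comm]

lemma moment_subst (n : ℕ) (α : ℝ) {β : ℝ} (hβ : β < 0) :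
    (-β) ^ (n+1) * ∫ x in Set.Ioi (0:ℝ), x ^ n * Real.exp (-α ^ 2 * x ^ 2 + β * x)
      = ∫ t in Set.Ioi (0:ℝ), t ^ n * Real.exp (-α ^ 2 * t ^ 2 / β ^ 2 - t) := by
  have hc : 0 < -β := by linarith
  have hβ2 : (β : ℝ) ^ 2 ≠ 0 := pow_ne_zero _ (ne_of_lt hβ)
  have key := integral_comp_mul_left_Ioi
    (fun t => t ^ n * Real.exp (-α ^ 2 * t ^ 2 / β ^ 2 - t)) 0 hc
  rw [mul_zero] at key
  have hg : ∀ x : ℝ, (-β * x) ^ n * Real.exp (-α ^ 2 * (-β * x) ^ 2 / β ^ 2 - -β * x)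
      = (-β) ^ n * (x ^ n * Real.exp (-α ^ 2 * x ^ 2 + β * x)) := by
    intro x
    have he : -α ^ 2 * (-β * x) ^ 2 / β ^ 2 - -β * x = -α ^ 2 * x ^ 2 + β * x := by
      have hq : -α ^ 2 * (-β * x) ^ 2 / β ^ 2 = -α ^ 2 * x ^ 2 := by
        rw [div_eq_iff hβ2]; ring
      rw [hq]; ring
    rw [he, mul_pow]
    ring
  simp only [hg] at key
  rw [MeasureTheory.integral_const_mul, smul_eq_mul] at key
  have := congrArg (fun y => (-β) * y) key
  rw [← mul_assoc, ← mul_assoc, mul_inv_cancel₀ (ne_of_gt hc), one_mul] at this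
  rw [pow_succ, mul_comm ((-β)^n) (-β), mul_assoc, ← mul_assoc]
  exact this

lemma subst_tendsto (n : ℕ) (α : ℝ) :
    Tendsto (fun β : ℝ => ∫ t in Set.Ioi (0:ℝ), t ^ n * Real.exp (-α ^ 2 * t ^ 2 / β ^ 2 - t))
      atBot (nhds (Nat.factorial n : ℝ)) := by
  rw [← polyExp_integral n]
  apply MeasureTheory.tendsto_integral_filter_of_dominated_convergence
    (fun t => t ^ n * Real.exp (-t))
  · filter_upwards with β
    exact (Continuous.aestronglyMeasurable (by fun_prop)).restrict
  · filter_upwards [eventually_lt_atBot (0:ℝ)] with β hβ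
    filter_upwards [ae_restrict_mem measurableSet_Ioi] with t ht
    rw [Set.mem_Ioi] at ht
    rw [Real.norm_eq_abs, abs_of_nonneg (by positivity)]
    have he : -α ^ 2 * t ^ 2 / β ^ 2 ≤ 0 := by
      apply div_nonpos_of_nonpos_of_nonneg
      · nlinarith [sq_nonneg α, sq_nonneg t]
      · positivity
    have := Real.exp_le_exp.mpr (show -α ^ 2 * t ^ 2 / β ^ 2 - t ≤ -t by linarith)
    exact mul_le_mul_of_nonneg_left this (by positivity)
  · exact polyExp_integrable n
  · filter_upwards with t
    have h2 : Tendsto (fun β : ℝ => -α ^ 2 * t ^ 2 / β ^ 2 - t) atBot (nhds (0 - t)) := by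
      apply Tendsto.sub_const
      have hsq : Tendsto (fun β : ℝ => β ^ 2) atBot atTop := by
        have h1 : Tendsto (fun β : ℝ => -β) atBot atTop := tendsto_neg_atBot_atTop
        have h2 : Tendsto (fun x : ℝ => x ^ 2) atTop atTop :=
          tendsto_pow_atTop (by norm_num)
        exact (h2.comp h1).congr fun β => by simp [Function.comp, neg_pow]
      have := hsq.inv_tendsto_atTop.const_mul (-α ^ 2 * t ^ 2)
      simpa [div_eq_mul_inv, Pi.inv_def] using this
    rw [zero_sub] at h2
    exact ((Real.continuous_exp.tendsto _).comp h2).const_mul _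

lemma moment_scaled (γ : ℕ) (α : ℝ) (k : ℕ) :
    Tendsto (fun β : ℝ => (-β) ^ (γ + k + 1) * g3pMoment γ α k β) atBot
      (nhds (Nat.factorial (γ + k) : ℝ)) := by
  apply (subst_tendsto (γ + k) α).congr'
  filter_upwards [eventually_lt_atBot (0:ℝ)] with β hβ
  exact (moment_subst (γ + k) α hβ).symm

/-- The shape parameter `μ²/σ²` of the moment-matched Gamma distribution tends to `γ+1`
as `β → −∞`. -/
theorem g3p_shape_tendsto (γ : ℕ) (hγ : 0 < γ) (α : ℝ) (hα : 0 < α) :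
    Tendsto (fun β : ℝ => (g3pMean γ α β) ^ 2 / g3pVar γ α β) atBot (nhds ((γ : ℝ) + 1)) := by
  have h0 := moment_scaled γ α 0
  have h1 := moment_scaled γ α 1
  have h2 := moment_scaled γ α 2
  set F : ℝ := (Nat.factorial γ : ℝ) with hF
  have hFpos : 0 < F := by positivity
  have hF1 : (Nat.factorial (γ + 1) : ℝ) = ((γ : ℝ) + 1) * F := by
    rw [hF]; push_cast [Nat.factorial_succ]; ring
  have hF2 : (Nat.factorial (γ + 2) : ℝ) = ((γ : ℝ) + 2) * (((γ : ℝ) + 1) * F) := by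
    rw [hF]
    show ((Nat.factorial (γ + 1 + 1) : ℝ)) = _
    push_cast [Nat.factorial_succ]; ring
  -- Limit of the N-ratio
  have hDen : Tendsto
      (fun β : ℝ => ((-β) ^ (γ + 2 + 1) * g3pMoment γ α 2 β) * ((-β) ^ (γ + 0 + 1) * g3pMoment γ α 0 β)
        - ((-β) ^ (γ + 1 + 1) * g3pMoment γ α 1 β) ^ 2) atBot
      (nhds ((Nat.factorial (γ + 2) : ℝ) * (Nat.factorial (γ + 0)) - (Nat.factorial (γ + 1)) ^ 2)) :=
    (h2.mul h0).sub (h1.pow 2)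
  have hNum : Tendsto (fun β : ℝ => ((-β) ^ (γ + 1 + 1) * g3pMoment γ α 1 β) ^ 2) atBot
      (nhds ((Nat.factorial (γ + 1) : ℝ) ^ 2)) := h1.pow 2
  have hDval : (Nat.factorial (γ + 2) : ℝ) * (Nat.factorial (γ + 0)) - (Nat.factorial (γ + 1)) ^ 2
      = ((γ : ℝ) + 1) * F ^ 2 := by
    rw [hF1, hF2]; simp only [Nat.add_zero, ← hF]; ring
  have hDne : (Nat.factorial (γ + 2) : ℝ) * (Nat.factorial (γ + 0)) - (Nat.factorial (γ + 1)) ^ 2 ≠ 0 := by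
    rw [hDval]; positivity
  have hratio := hNum.div hDen hDne
  have hval : (Nat.factorial (γ + 1) : ℝ) ^ 2
      / ((Nat.factorial (γ + 2) : ℝ) * (Nat.factorial (γ + 0)) - (Nat.factorial (γ + 1)) ^ 2)
      = (γ : ℝ) + 1 := by
    rw [hDval, hF1, div_eq_iff (by positivity : ((γ : ℝ) + 1) * F ^ 2 ≠ 0)]
    ring
  rw [hval] at hratio
  -- eventual equality of the two expressions
  refine hratio.congr' ?_
  have hN0ne := h0.eventually_ne (by positivity : (Nat.factorial (γ + 0) : ℝ) ≠ 0)
  filter_upwards [eventually_lt_atBot (0:ℝ), hN0ne] with β hβ hne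
  have hcne : (-β : ℝ) ≠ 0 := by simp; linarith
  have hM0ne : g3pMoment γ α 0 β ≠ 0 := by
    intro h
    apply hne
    rw [h, mul_zero]
  simp only [Pi.div_apply]
  set c : ℝ := -β
  set M0 := g3pMoment γ α 0 β
  set M1 := g3pMoment γ α 1 β
  set M2 := g3pMoment γ α 2 β
  have key : (c ^ (γ + 2 + 1) * M2) * (c ^ (γ + 0 + 1) * M0) - (c ^ (γ + 1 + 1) * M1) ^ 2
      = c ^ (2 * γ + 4) * (M2 * M0 - M1 ^ 2) := by ring
  have keyN : (c ^ (γ + 1 + 1) * M1) ^ 2 = c ^ (2 * γ + 4) * M1 ^ 2 := by ring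
  rw [key, keyN, mul_div_mul_left _ _ (pow_ne_zero _ hcne)]
  -- now show M1²/(M2·M0 − M1²) = μ²/σ²
  have hμ : g3pMean γ α β = M1 / M0 := rfl
  have hvar : g3pVar γ α β = (M2 * M0 - M1 ^ 2) / M0 ^ 2 := by
    rw [g3pVar, hμ, div_pow]
    change M2 / M0 - M1 ^ 2 / M0 ^ 2 = _
    field_simp
  rw [hμ, hvar, div_pow]
  rcases eq_or_ne (M2 * M0 - M1 ^ 2) 0 with h | h
  · rw [h]
    simp
  · field_simp
end

section
/- Fix a positive integer γ and a real α > 0. For β ∈ ℝ and k = 0, 1, 2 define M_k(β) = ∫₀^∞ x^{γ+k} e^{−α²x² + βx} dx, and set μ(β) = M₁(β)/M₀(β) and σ²(β) = M₂(β)/M₀(β) − μ(β)². Then lim_{β → −∞} ( μ(β)/σ²(β) + β ) = 0. -/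
open MeasureTheory Filter

section Helpers
open Set Real Nat


noncomputable def mk' (α : ℝ) (n : ℕ) (β : ℝ) : ℝ :=
  ∫ x in Set.Ioi (0 : ℝ), x ^ n * Real.exp (-α ^ 2 * x ^ 2 + β * x)

lemma mk'_integrable {α : ℝ} (hα : 0 < α) (n : ℕ) (β : ℝ) :
    IntegrableOn (fun x => x ^ n * Real.exp (-α ^ 2 * x ^ 2 + β * x)) (Set.Ioi 0) := by
  have hb : (0:ℝ) < α ^ 2 / 2 := by positivity
  have hmaj : IntegrableOn (fun x : ℝ => Real.exp (β ^ 2 / (2 * α ^ 2)) *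
      (x ^ ((n:ℝ)) * Real.exp (-(α ^ 2 / 2) * x ^ 2))) (Set.Ioi 0) :=
    ((integrableOn_rpow_mul_exp_neg_mul_sq hb
      (lt_of_lt_of_le (by norm_num) (Nat.cast_nonneg n) : (-1:ℝ) < n)).const_mul _)
  refine Integrable.mono' hmaj ?_ ?_
  · exact (Continuous.aestronglyMeasurable (by continuity)).restrict
  · filter_upwards [ae_restrict_mem measurableSet_Ioi] with x hx
    have hx0 : (0:ℝ) < x := hx
    have h1 : -α ^ 2 * x ^ 2 + β * x ≤ -(α ^ 2 / 2) * x ^ 2 + β ^ 2 / (2 * α ^ 2) := by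
      rw [← sub_nonneg]
      have h3 : -(α ^ 2 / 2) * x ^ 2 + β ^ 2 / (2 * α ^ 2) - (-α ^ 2 * x ^ 2 + β * x)
          = (α ^ 2 * x - β) ^ 2 / (2 * α ^ 2) := by field_simp; ring
      rw [h3]; positivity
    have hxp : x ^ ((n:ℝ)) = x ^ n := Real.rpow_natCast x n
    rw [norm_mul, norm_pow, Real.norm_eq_abs, Real.norm_eq_abs, abs_of_pos hx0,
      abs_of_pos (Real.exp_pos _), hxp, mul_comm (Real.exp _), mul_assoc, ← Real.exp_add]
    refine mul_le_mul_of_nonneg_left (Real.exp_le_exp.2 ?_) (by positivity)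
    linarith [h1]

lemma mk'_pos {α : ℝ} (hα : 0 < α) (n : ℕ) (β : ℝ) : 0 < mk' α n β := by
  rw [mk', setIntegral_pos_iff_support_of_nonneg_ae]
  · have hsup : (Function.support fun x : ℝ => x ^ n * Real.exp (-α ^ 2 * x ^ 2 + β * x))
        ∩ Set.Ioi 0 = Set.Ioi 0 := by
      apply Set.inter_eq_right.2
      intro x hx
      have hx0 : (0:ℝ) < x := hx
      simp only [Function.mem_support]
      positivity
    rw [hsup]
    simp [Real.volume_Ioi]
  · filter_upwards [ae_restrict_mem measurableSet_Ioi] with x hx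
    have hx0 : (0:ℝ) < x := hx
    positivity
  · exact mk'_integrable hα n β


lemma tendstoZero {α : ℝ} (hα : 0 < α) (m : ℕ) (β : ℝ) :
    Tendsto (fun x : ℝ => x ^ m * Real.exp (-α ^ 2 * x ^ 2 + β * x)) atTop (nhds 0) := by
  have h1 := Real.tendsto_pow_mul_exp_neg_atTop_nhds_zero m
  apply squeeze_zero' ?_ ?_ h1
  · filter_upwards [eventually_ge_atTop (0:ℝ)] with x hx
    positivity
  · filter_upwards [eventually_ge_atTop ((β + 1) / α ^ 2), eventually_ge_atTop (0:ℝ)]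
      with x hx1 hx0
    have key : -α ^ 2 * x ^ 2 + β * x ≤ -x := by
      have h2 : (β + 1) * x ≤ α ^ 2 * x * x := by
        rcases eq_or_lt_of_le hx0 with h | h
        · rw [← h]; ring_nf; rfl
        · have := (div_le_iff₀ (by positivity : (0:ℝ) < α ^ 2)).1 hx1
          nlinarith
      nlinarith
    calc x ^ m * Real.exp (-α ^ 2 * x ^ 2 + β * x)
        ≤ x ^ m * Real.exp (-x) :=
          mul_le_mul_of_nonneg_left (Real.exp_le_exp.2 key) (by positivity)
      _ = x ^ m * Real.exp (-x) := rfl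

lemma mk'_identity {α : ℝ} (hα : 0 < α) (n : ℕ) (β : ℝ) :
    ((n:ℝ) + 1) * mk' α n β + β * mk' α (n + 1) β = 2 * α ^ 2 * mk' α (n + 2) β := by
  set f' : ℝ → ℝ := fun x => ((n:ℝ) + 1) * (x ^ n * Real.exp (-α ^ 2 * x ^ 2 + β * x))
      + β * (x ^ (n+1) * Real.exp (-α ^ 2 * x ^ 2 + β * x))
      - 2 * α ^ 2 * (x ^ (n+2) * Real.exp (-α ^ 2 * x ^ 2 + β * x)) with hf'
  have hint : IntegrableOn f' (Set.Ioi 0) :=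
    (((mk'_integrable hα n β).const_mul _).add
      ((mk'_integrable hα (n+1) β).const_mul _)).sub ((mk'_integrable hα (n+2) β).const_mul _)
  have hderiv : ∀ x ∈ Set.Ici (0:ℝ),
      HasDerivAt (fun x : ℝ => x ^ (n+1) * Real.exp (-α ^ 2 * x ^ 2 + β * x)) (f' x) x := by
    intro x _
    have h1 : HasDerivAt (fun x : ℝ => x ^ (n+1)) (((n:ℝ)+1) * x ^ n) x := by
      simpa using hasDerivAt_pow (n+1) x
    have h2 : HasDerivAt (fun x : ℝ => -α ^ 2 * x ^ 2 + β * x) (-α ^ 2 * (2 * x) + β) x := by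
      have ha : HasDerivAt (fun x : ℝ => x ^ 2) (2 * x) x := by simpa using hasDerivAt_pow 2 x
      have hb : HasDerivAt (fun x : ℝ => β * x) β x := by
        simpa using (hasDerivAt_id x).const_mul β
      exact (ha.const_mul _).add hb
    have h3 := h2.exp
    have h4 := h1.mul h3
    refine h4.congr_deriv ?_
    rw [hf']; ring
  have hzero : (∫ x in Set.Ioi (0:ℝ), f' x) = 0 := by
    rw [integral_Ioi_of_hasDerivAt_of_tendsto' hderiv hint (tendstoZero hα (n+1) β)]
    norm_num
  have hsplit : (∫ x in Set.Ioi (0:ℝ), f' x)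
      = ((n:ℝ) + 1) * mk' α n β + β * mk' α (n + 1) β - 2 * α ^ 2 * mk' α (n + 2) β := by
    have e3 : (∫ x in Set.Ioi (0:ℝ), f' x)
        = (∫ x in Set.Ioi (0:ℝ), (((n:ℝ) + 1) * (x ^ n * Real.exp (-α ^ 2 * x ^ 2 + β * x))
            + β * (x ^ (n+1) * Real.exp (-α ^ 2 * x ^ 2 + β * x))))
          - ∫ x in Set.Ioi (0:ℝ), 2 * α ^ 2 * (x ^ (n+2) * Real.exp (-α ^ 2 * x ^ 2 + β * x)) :=
      integral_sub (((mk'_integrable hα n β).const_mul _).add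
        ((mk'_integrable hα (n+1) β).const_mul _)) ((mk'_integrable hα (n+2) β).const_mul _)
    have e4 : (∫ x in Set.Ioi (0:ℝ), (((n:ℝ) + 1) * (x ^ n * Real.exp (-α ^ 2 * x ^ 2 + β * x))
            + β * (x ^ (n+1) * Real.exp (-α ^ 2 * x ^ 2 + β * x))))
        = (∫ x in Set.Ioi (0:ℝ), ((n:ℝ) + 1) * (x ^ n * Real.exp (-α ^ 2 * x ^ 2 + β * x)))
          + ∫ x in Set.Ioi (0:ℝ), β * (x ^ (n+1) * Real.exp (-α ^ 2 * x ^ 2 + β * x)) :=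
      integral_add ((mk'_integrable hα n β).const_mul _) ((mk'_integrable hα (n+1) β).const_mul _)
    rw [e3, e4, MeasureTheory.integral_const_mul, MeasureTheory.integral_const_mul, MeasureTheory.integral_const_mul]
    rfl
  rw [hzero] at hsplit
  linarith

lemma mk'_scaled {α : ℝ} (n : ℕ) {b : ℝ} (hb : 0 < b) :
    b ^ (n + 1) * mk' α n (-b)
      = ∫ u in Set.Ioi (0:ℝ), u ^ n * Real.exp (-(α ^ 2 / b ^ 2) * u ^ 2 - u) := by
  have h := integral_comp_mul_left_Ioi
    (fun u : ℝ => u ^ n * Real.exp (-(α ^ 2 / b ^ 2) * u ^ 2 - u)) 0 hb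
  have h2 : (fun x : ℝ => (b * x) ^ n * Real.exp (-(α ^ 2 / b ^ 2) * (b * x) ^ 2 - b * x))
      = fun x : ℝ => b ^ n * (x ^ n * Real.exp (-α ^ 2 * x ^ 2 + (-b) * x)) := by
    funext x
    have harg : -(α ^ 2 / b ^ 2) * (b * x) ^ 2 - b * x = -α ^ 2 * x ^ 2 + (-b) * x := by
      field_simp; ring
    rw [harg, mul_pow]; ring
  simp only [h2, mul_zero] at h
  rw [MeasureTheory.integral_const_mul] at h
  rw [smul_eq_mul] at h
  rw [mk', pow_succ, mul_comm (b ^ n) b, mul_assoc, h, ← mul_assoc,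
    mul_inv_cancel₀ hb.ne', one_mul]

lemma bound_integrable (n : ℕ) :
    IntegrableOn (fun u : ℝ => u ^ n * Real.exp (-u)) (Set.Ioi 0) := by
  have h := Real.GammaIntegral_convergent (s := (n:ℝ) + 1) (by positivity)
  refine h.congr_fun ?_ measurableSet_Ioi
  intro x hx
  have hx0 : (0:ℝ) < x := hx
  show Real.exp (-x) * x ^ ((n:ℝ) + 1 - 1) = x ^ n * Real.exp (-x)
  rw [show (n:ℝ) + 1 - 1 = (n:ℝ) by ring, Real.rpow_natCast]
  ring

lemma gamma_value (n : ℕ) :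
    (∫ u in Set.Ioi (0:ℝ), u ^ n * Real.exp (-u)) = (n ! : ℝ) := by
  have h := Real.Gamma_eq_integral (s := (n:ℝ) + 1) (by positivity)
  have h2 : Real.Gamma ((n:ℝ) + 1) = (n ! : ℝ) := by
    exact_mod_cast Real.Gamma_nat_eq_factorial n
  rw [h2] at h
  rw [h]
  refine setIntegral_congr_fun measurableSet_Ioi fun x hx => ?_
  have hx0 : (0:ℝ) < x := hx
  show x ^ n * Real.exp (-x) = Real.exp (-x) * x ^ ((n:ℝ) + 1 - 1)
  rw [show (n:ℝ) + 1 - 1 = (n:ℝ) by ring, Real.rpow_natCast]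
  ring

lemma mk'_limit {α : ℝ} (hα : 0 < α) (n : ℕ) :
    Tendsto (fun b : ℝ => b ^ (n + 1) * mk' α n (-b)) atTop (nhds (n ! : ℝ)) := by
  have key : Tendsto (fun b : ℝ => ∫ u in Set.Ioi (0:ℝ),
      u ^ n * Real.exp (-(α ^ 2 / b ^ 2) * u ^ 2 - u)) atTop
      (nhds (∫ u in Set.Ioi (0:ℝ), u ^ n * Real.exp (-u))) := by
    refine tendsto_integral_filter_of_dominated_convergence
      (fun u => u ^ n * Real.exp (-u)) ?_ ?_ (bound_integrable n) ?_
    · filter_upwards with b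
      exact (Continuous.aestronglyMeasurable (by continuity)).restrict
    · filter_upwards [eventually_ge_atTop (1:ℝ)] with b hb
      filter_upwards [ae_restrict_mem measurableSet_Ioi] with u hu
      have hu0 : (0:ℝ) < u := hu
      have harg : -(α ^ 2 / b ^ 2) * u ^ 2 - u ≤ -u := by
        have : (0:ℝ) ≤ (α ^ 2 / b ^ 2) * u ^ 2 := by positivity
        linarith
      rw [Real.norm_eq_abs, abs_mul, abs_pow, abs_of_pos hu0, abs_of_pos (Real.exp_pos _)]
      exact mul_le_mul_of_nonneg_left (Real.exp_le_exp.2 harg) (by positivity)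
    · filter_upwards [ae_restrict_mem measurableSet_Ioi] with u hu
      have h0 : Tendsto (fun b : ℝ => α ^ 2 / b ^ 2) atTop (nhds 0) :=
        Tendsto.div_atTop tendsto_const_nhds (tendsto_pow_atTop two_ne_zero)
      have h1 : Tendsto (fun b : ℝ => -(α ^ 2 / b ^ 2) * u ^ 2 - u) atTop
          (nhds (-(0:ℝ) * u ^ 2 - u)) := (h0.neg.mul_const _).sub_const u
      have h2 := (Real.continuous_exp.continuousAt.tendsto.comp h1).const_mul (u ^ n)
      simpa using h2
  rw [gamma_value n] at key
  apply key.congr'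
  filter_upwards [eventually_gt_atTop (0:ℝ)] with b hb
  exact (mk'_scaled n hb).symm

lemma key_eq {α : ℝ} (hα : 0 < α) (γ : ℕ) {β : ℝ}
    (hD : 0 < mk' α (γ+2) β * mk' α γ β - mk' α (γ+1) β ^ 2) :
    g3pMean γ α β / g3pVar γ α β + β
      = 2 * α ^ 2 * (mk' α (γ+3) β * mk' α γ β - mk' α (γ+2) β * mk' α (γ+1) β)
        / (mk' α (γ+2) β * mk' α γ β - mk' α (γ+1) β ^ 2) := by
  have h0 : 0 < mk' α γ β := mk'_pos hα γ β
  have id1 : ((γ:ℝ) + 1) * mk' α γ β + β * mk' α (γ+1) β = 2 * α ^ 2 * mk' α (γ+2) β :=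
    mk'_identity hα γ β
  have id2 : ((γ:ℝ) + 2) * mk' α (γ+1) β + β * mk' α (γ+2) β = 2 * α ^ 2 * mk' α (γ+3) β := by
    have := mk'_identity hα (γ+1) β
    push_cast at this ⊢
    convert this using 2 <;> ring
  have hM1 : g3pMoment γ α 1 β = mk' α (γ+1) β := rfl
  have hM0 : g3pMoment γ α 0 β = mk' α γ β := rfl
  have hM2 : g3pMoment γ α 2 β = mk' α (γ+2) β := rfl
  have hvar : g3pVar γ α β
      = (mk' α (γ+2) β * mk' α γ β - mk' α (γ+1) β ^ 2) / mk' α γ β ^ 2 := by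
    rw [g3pVar, g3pMean, hM0, hM1, hM2]
    field_simp
  rw [g3pMean, hM0, hM1, hvar]
  have e1 : mk' α (γ+1) β / mk' α γ β
      / ((mk' α (γ+2) β * mk' α γ β - mk' α (γ+1) β ^ 2) / mk' α γ β ^ 2)
      = mk' α (γ+1) β * mk' α γ β / (mk' α (γ+2) β * mk' α γ β - mk' α (γ+1) β ^ 2) := by
    rw [div_div_div_eq]
    rw [div_eq_div_iff (by positivity) (by positivity)]
    ring
  rw [e1, div_add' _ _ _ hD.ne']
  congr 1
  linear_combination (mk' α γ β) * id2 - (mk' α (γ+1) β) * id1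

lemma D_limit {α : ℝ} (hα : 0 < α) (γ : ℕ) :
    Tendsto (fun b : ℝ => b ^ (2*γ+4) *
        (mk' α (γ+2) (-b) * mk' α γ (-b) - mk' α (γ+1) (-b) ^ 2)) atTop
      (nhds (((γ+2)! * γ ! : ℝ) - ((γ+1)! : ℝ) ^ 2)) := by
  have h := ((mk'_limit hα (γ+2)).mul (mk'_limit hα γ)).sub
    ((mk'_limit hα (γ+1)).mul (mk'_limit hα (γ+1)))
  have he : (fun b : ℝ => (b ^ (γ+2+1) * mk' α (γ+2) (-b)) * (b ^ (γ+1) * mk' α γ (-b))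
      - (b ^ (γ+1+1) * mk' α (γ+1) (-b)) * (b ^ (γ+1+1) * mk' α (γ+1) (-b)))
      = fun b : ℝ => b ^ (2*γ+4) *
        (mk' α (γ+2) (-b) * mk' α γ (-b) - mk' α (γ+1) (-b) ^ 2) := by
    funext b; ring
  rw [he] at h
  convert h using 2
  ring

lemma N_limit {α : ℝ} (hα : 0 < α) (γ : ℕ) :
    Tendsto (fun b : ℝ => b ^ (2*γ+5) *
        (mk' α (γ+3) (-b) * mk' α γ (-b) - mk' α (γ+2) (-b) * mk' α (γ+1) (-b))) atTop
      (nhds (((γ+3)! * γ ! : ℝ) - ((γ+2)! * (γ+1)! : ℝ))) := by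
  have h := ((mk'_limit hα (γ+3)).mul (mk'_limit hα γ)).sub
    ((mk'_limit hα (γ+2)).mul (mk'_limit hα (γ+1)))
  have he : (fun b : ℝ => (b ^ (γ+3+1) * mk' α (γ+3) (-b)) * (b ^ (γ+1) * mk' α γ (-b))
      - (b ^ (γ+2+1) * mk' α (γ+2) (-b)) * (b ^ (γ+1+1) * mk' α (γ+1) (-b)))
      = fun b : ℝ => b ^ (2*γ+5) *
        (mk' α (γ+3) (-b) * mk' α γ (-b) - mk' α (γ+2) (-b) * mk' α (γ+1) (-b)) := by
    funext b; ring
  rw [he] at h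
  exact h

/-- The rate parameter `μ/σ²` of the moment-matched Gamma distribution satisfies
`μ/σ² + β → 0` as `β → −∞`, i.e. `c → −β`. -/
theorem g3p_rate_tendsto (γ : ℕ) (hγ : 0 < γ) (α : ℝ) (hα : 0 < α) :
    Tendsto (fun β : ℝ => g3pMean γ α β / g3pVar γ α β + β) atBot (nhds 0) := by
  set D : ℝ → ℝ := fun β => mk' α (γ+2) β * mk' α γ β - mk' α (γ+1) β ^ 2 with hDdef
  set N : ℝ → ℝ := fun β =>
    mk' α (γ+3) β * mk' α γ β - mk' α (γ+2) β * mk' α (γ+1) β with hNdef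
  have hcD : (0:ℝ) < ((γ+2)! * γ ! : ℝ) - ((γ+1)! : ℝ) ^ 2 := by
    have e : ((γ+2)! * γ ! : ℝ) - ((γ+1)! : ℝ) ^ 2 = ((γ+1)! : ℝ) * (γ ! : ℝ) := by
      rw [show γ + 2 = (γ + 1) + 1 from rfl, Nat.factorial_succ (γ+1), Nat.factorial_succ γ]
      push_cast; ring
    rw [e]; positivity
  -- eventual positivity of D (-b)
  have hDlim := D_limit hα γ
  have hDpos : ∀ᶠ b : ℝ in atTop, 0 < D (-b) := by
    filter_upwards [hDlim.eventually (eventually_gt_nhds (by linarith :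
        (0:ℝ) < ((γ+2)! * γ ! : ℝ) - ((γ+1)! : ℝ) ^ 2)), eventually_gt_atTop (0:ℝ)]
      with b hb hb0
    by_contra h
    push_neg at h
    simp only [hDdef] at h
    nlinarith [pow_pos hb0 (2*γ+4)]
  -- the rescaled quotient tends to 0
  have hT : Tendsto (fun b : ℝ => 2 * α ^ 2 * N (-b) / D (-b)) atTop (nhds 0) := by
    have hmain : Tendsto (fun b : ℝ =>
        2 * α ^ 2 * (b ^ (2*γ+5) * N (-b)) / (b ^ (2*γ+4) * D (-b)) * b⁻¹) atTop
        (nhds (2 * α ^ 2 * (((γ+3)! * γ ! : ℝ) - ((γ+2)! * (γ+1)! : ℝ))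
          / (((γ+2)! * γ ! : ℝ) - ((γ+1)! : ℝ) ^ 2) * 0)) :=
      ((((N_limit hα γ).const_mul (2 * α ^ 2)).div hDlim hcD.ne').mul tendsto_inv_atTop_zero)
    rw [mul_zero] at hmain
    apply hmain.congr'
    filter_upwards [hDpos, eventually_gt_atTop (0:ℝ)] with b hD hb0
    rw [div_mul_eq_mul_div, div_eq_div_iff
      (mul_pos (pow_pos hb0 (2*γ+4)) hD).ne' hD.ne']
    field_simp
    ring
  -- transfer to atBot and conclude
  have hT2 : Tendsto (fun β : ℝ => 2 * α ^ 2 * N β / D β) atBot (nhds 0) := by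
    have := hT.comp tendsto_neg_atBot_atTop
    simpa [Function.comp_def] using this
  apply hT2.congr'
  have hDpos2 : ∀ᶠ β : ℝ in atBot, 0 < D β := by
    have := tendsto_neg_atBot_atTop.eventually hDpos
    simpa using this
  filter_upwards [hDpos2] with β hD
  exact (key_eq hα γ hD).symm

end Helpers
end

section
/- Fix a positive integer γ and a real α > 0. For β ∈ ℝ define M₀(β) = ∫₀^∞ x^{γ} e^{−α²x² + βx} dx and M₁(β) = ∫₀^∞ x^{γ+1} e^{−α²x² + βx} dx, and set μ(β) = M₁(β)/M₀(β). Then lim_{β → +∞} 2α² μ(β)/β = 1. -/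
open MeasureTheory Filter

open Set

noncomputable def g3pJ (α : ℝ) (n : ℕ) (β : ℝ) : ℝ :=
  ∫ x in Set.Ioi (0 : ℝ), x ^ n * Real.exp (-α ^ 2 * x ^ 2 + β * x)

lemma g3pJ_bound_evt {α : ℝ} (hα : 0 < α) (m : ℕ) (β : ℝ) :
    ∀ᶠ x in atTop, x ^ m * Real.exp (-α ^ 2 * x ^ 2 + β * x) ≤ Real.exp (-x) := by
  filter_upwards [eventually_ge_atTop ((m + β + 1) / α ^ 2), eventually_ge_atTop (0 : ℝ)]
    with x hx hx0
  have hA : (0:ℝ) < α ^ 2 := by positivity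
  have h2 : (m + β + 1) * x ≤ α ^ 2 * x ^ 2 := by
    have h : (m + β + 1) ≤ α ^ 2 * x := by
      rw [div_le_iff₀ hA] at hx; linarith [hx]
    nlinarith
  have h1 : x ^ m ≤ Real.exp (m * x) := by
    calc x ^ m ≤ (Real.exp x) ^ m :=
          pow_le_pow_left₀ hx0 (by linarith [Real.add_one_le_exp x]) m
      _ = Real.exp (m * x) := (Real.exp_nat_mul x m).symm
  calc x ^ m * Real.exp (-α ^ 2 * x ^ 2 + β * x)
      ≤ Real.exp (m * x) * Real.exp (-α ^ 2 * x ^ 2 + β * x) :=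
        mul_le_mul_of_nonneg_right h1 (Real.exp_pos _).le
    _ = Real.exp (m * x + (-α ^ 2 * x ^ 2 + β * x)) := (Real.exp_add _ _).symm
    _ ≤ Real.exp (-x) := Real.exp_le_exp.2 (by nlinarith)

lemma g3pJ_integrable {α : ℝ} (hα : 0 < α) (m : ℕ) (β : ℝ) :
    IntegrableOn (fun x => x ^ m * Real.exp (-α ^ 2 * x ^ 2 + β * x)) (Set.Ioi (0:ℝ)) := by
  apply integrable_of_isBigO_exp_neg (a := 0) (b := 1) one_pos
  · fun_prop
  · apply Asymptotics.IsBigO.of_bound 1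
    filter_upwards [g3pJ_bound_evt hα m β, eventually_ge_atTop (0:ℝ)] with x hx hx0
    rw [one_mul]
    have h0 : 0 ≤ x ^ m * Real.exp (-α ^ 2 * x ^ 2 + β * x) := by positivity
    rw [Real.norm_eq_abs, Real.norm_eq_abs, abs_of_nonneg h0,
      abs_of_nonneg (Real.exp_pos _).le, neg_one_mul]
    exact hx

lemma g3pJ_tendsto_zero {α : ℝ} (hα : 0 < α) (m : ℕ) (β : ℝ) :
    Tendsto (fun x => x ^ m * Real.exp (-α ^ 2 * x ^ 2 + β * x)) atTop (nhds 0) := by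
  apply squeeze_zero' _ (g3pJ_bound_evt hα m β)
  · exact Real.tendsto_exp_atBot.comp tendsto_neg_atTop_atBot
  · filter_upwards [eventually_ge_atTop (0:ℝ)] with x hx0; positivity

lemma g3pJ_pos {α : ℝ} (hα : 0 < α) (m : ℕ) (β : ℝ) : 0 < g3pJ α m β := by
  rw [g3pJ, setIntegral_pos_iff_support_of_nonneg_ae]
  · refine lt_of_lt_of_le ?_ (measure_mono (s := Set.Ioi (0:ℝ)) ?_)
    · rw [Real.volume_Ioi]; exact ENNReal.zero_lt_top
    · intro x hx
      refine ⟨?_, hx⟩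
      have hx' : (0:ℝ) < x := hx
      simp only [Function.mem_support]
      positivity
  · rw [EventuallyLE, ae_restrict_iff' measurableSet_Ioi]
    filter_upwards with x hx
    have hx' : (0:ℝ) < x := hx
    positivity
  · exact g3pJ_integrable hα m β

lemma g3pJ_recursion {α : ℝ} (hα : 0 < α) (n : ℕ) (β : ℝ) :
    2 * α ^ 2 * g3pJ α (n + 2) β = β * g3pJ α (n + 1) β + (n + 1) * g3pJ α n β := by
  set E : ℝ → ℝ := fun x => Real.exp (-α ^ 2 * x ^ 2 + β * x) with hE
  set f' : ℝ → ℝ := fun x =>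
    (n + 1 : ℝ) * (x ^ n * E x) + β * (x ^ (n + 1) * E x) - 2 * α ^ 2 * (x ^ (n + 2) * E x)
    with hf'
  have hderiv : ∀ x ∈ Set.Ici (0:ℝ), HasDerivAt (fun x => x ^ (n + 1) * E x) (f' x) x := by
    intro x _
    have h1 : HasDerivAt (fun x : ℝ => -α ^ 2 * x ^ 2 + β * x) (-α ^ 2 * (2 * x) + β) x := by
      have := (((hasDerivAt_pow 2 x).const_mul (-α ^ 2)).add ((hasDerivAt_id x).const_mul β))
      exact this.congr_deriv (by norm_num)
    have h2 := h1.exp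
    have h3 := (hasDerivAt_pow (n + 1) x).mul h2
    refine h3.congr_deriv ?_
    simp only [hf', hE]
    push_cast
    ring
  have hint : IntegrableOn f' (Set.Ioi (0:ℝ)) := by
    exact (((g3pJ_integrable hα n β).const_mul _).add
      ((g3pJ_integrable hα (n+1) β).const_mul _)).sub
      ((g3pJ_integrable hα (n+2) β).const_mul _)
  have h0 : Tendsto (fun x => x ^ (n + 1) * E x) atTop (nhds 0) := g3pJ_tendsto_zero hα (n+1) β
  have key := integral_Ioi_of_hasDerivAt_of_tendsto' hderiv hint h0
  rw [zero_pow (Nat.succ_ne_zero n), zero_mul, sub_zero] at key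

  have hsplit : ∫ x in Set.Ioi (0:ℝ), f' x =
      (n + 1 : ℝ) * g3pJ α n β + β * g3pJ α (n + 1) β - 2 * α ^ 2 * g3pJ α (n + 2) β := by
    have i1 : Integrable (fun x => (n + 1 : ℝ) * (x ^ n * E x)) (volume.restrict (Set.Ioi 0)) :=
      (g3pJ_integrable hα n β).const_mul _
    have i2 : Integrable (fun x => β * (x ^ (n + 1) * E x)) (volume.restrict (Set.Ioi 0)) :=
      (g3pJ_integrable hα (n + 1) β).const_mul _
    have i3 : Integrable (fun x => 2 * α ^ 2 * (x ^ (n + 2) * E x)) (volume.restrict (Set.Ioi 0)) :=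
      (g3pJ_integrable hα (n + 2) β).const_mul _
    have i12 : Integrable (fun x => (n + 1 : ℝ) * (x ^ n * E x) + β * (x ^ (n + 1) * E x))
        (volume.restrict (Set.Ioi 0)) := i1.add i2
    simp only [hf']
    rw [integral_sub i12 i3, integral_add i1 i2, integral_const_mul, integral_const_mul, integral_const_mul]
    rfl
  rw [hsplit] at key
  linarith

lemma g3pJ_nonneg_ae {α : ℝ} (n : ℕ) (β : ℝ) {s : Set ℝ} (hs : MeasurableSet s)
    (h : ∀ x ∈ s, (0:ℝ) < x) :
    0 ≤ᵐ[volume.restrict s] fun x => x ^ n * Real.exp (-α ^ 2 * x ^ 2 + β * x) := by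
  rw [EventuallyLE, ae_restrict_iff' hs]
  filter_upwards with x hx
  have := h x hx
  positivity

lemma g3pJ_upper {α : ℝ} (hα : 0 < α) (n : ℕ) {β : ℝ} (hβ : 0 < β) :
    g3pJ α n β ≤ (β / (8 * α ^ 2)) ^ (n + 1) * Real.exp (β * (β / (8 * α ^ 2)))
      + g3pJ α (n + 1) β / (β / (8 * α ^ 2)) := by
  set T : ℝ := β / (8 * α ^ 2) with hT
  have hT0 : 0 < T := by positivity
  have hsplit : g3pJ α n β = (∫ x in Set.Ioc (0:ℝ) T, x ^ n * Real.exp (-α ^ 2 * x ^ 2 + β * x))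
      + ∫ x in Set.Ioi T, x ^ n * Real.exp (-α ^ 2 * x ^ 2 + β * x) := by
    rw [g3pJ, ← Set.Ioc_union_Ioi_eq_Ioi hT0.le,
      setIntegral_union (Set.Ioc_disjoint_Ioi le_rfl) measurableSet_Ioi
        (((g3pJ_integrable hα n β)).mono_set (by
          rw [← Set.Ioc_union_Ioi_eq_Ioi hT0.le]; exact Set.subset_union_left))
        (((g3pJ_integrable hα n β)).mono_set (Set.Ioi_subset_Ioi hT0.le))]
  have h1 : (∫ x in Set.Ioc (0:ℝ) T, x ^ n * Real.exp (-α ^ 2 * x ^ 2 + β * x))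
      ≤ T ^ (n + 1) * Real.exp (β * T) := by
    have : (∫ x in Set.Ioc (0:ℝ) T, x ^ n * Real.exp (-α ^ 2 * x ^ 2 + β * x))
        ≤ ∫ _ in Set.Ioc (0:ℝ) T, T ^ n * Real.exp (β * T) := by
      apply setIntegral_mono_on
      · exact ((g3pJ_integrable hα n β)).mono_set (by
          rw [← Set.Ioc_union_Ioi_eq_Ioi hT0.le]; exact Set.subset_union_left)
      · exact integrableOn_const measure_Ioc_lt_top.ne
      · exact measurableSet_Ioc
      · intro x hx
        have hx0 : 0 < x := hx.1
        have hxT : x ≤ T := hx.2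
        have e1 : x ^ n ≤ T ^ n := pow_le_pow_left₀ hx0.le hxT n
        have e2 : Real.exp (-α ^ 2 * x ^ 2 + β * x) ≤ Real.exp (β * T) := by
          apply Real.exp_le_exp.2; nlinarith
        exact mul_le_mul e1 e2 (Real.exp_pos _).le (by positivity)
    rw [setIntegral_const, Real.volume_real_Ioc_of_le (by linarith), smul_eq_mul] at this
    calc (∫ x in Set.Ioc (0:ℝ) T, x ^ n * Real.exp (-α ^ 2 * x ^ 2 + β * x))
        ≤ (T - 0) * (T ^ n * Real.exp (β * T)) := this
      _ = T ^ (n + 1) * Real.exp (β * T) := by rw [pow_succ]; ring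
  have h2 : (∫ x in Set.Ioi T, x ^ n * Real.exp (-α ^ 2 * x ^ 2 + β * x))
      ≤ g3pJ α (n + 1) β / T := by
    have s1 : (∫ x in Set.Ioi T, x ^ n * Real.exp (-α ^ 2 * x ^ 2 + β * x))
        ≤ ∫ x in Set.Ioi T, (x ^ (n + 1) * Real.exp (-α ^ 2 * x ^ 2 + β * x)) / T := by
      apply setIntegral_mono_on
      · exact ((g3pJ_integrable hα n β)).mono_set (Set.Ioi_subset_Ioi hT0.le)
      · exact (((g3pJ_integrable hα (n+1) β)).mono_set (Set.Ioi_subset_Ioi hT0.le)).div_const T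
      · exact measurableSet_Ioi
      · intro x hx
        have hx0 : T < x := hx
        rw [le_div_iff₀ hT0]
        have hE : 0 < Real.exp (-α ^ 2 * x ^ 2 + β * x) := Real.exp_pos _
        have hxn : (0:ℝ) ≤ x ^ n := pow_nonneg (by linarith) n
        nlinarith [pow_succ x n, mul_nonneg (mul_nonneg hxn hE.le) (sub_nonneg.2 hx0.le)]
    have s2 : (∫ x in Set.Ioi T, (x ^ (n + 1) * Real.exp (-α ^ 2 * x ^ 2 + β * x)) / T)
        = (∫ x in Set.Ioi T, x ^ (n + 1) * Real.exp (-α ^ 2 * x ^ 2 + β * x)) / T :=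
      integral_div _ _
    have s3 : (∫ x in Set.Ioi T, x ^ (n + 1) * Real.exp (-α ^ 2 * x ^ 2 + β * x))
        ≤ g3pJ α (n + 1) β := by
      apply setIntegral_mono_set (g3pJ_integrable hα (n+1) β) (g3pJ_nonneg_ae _ _ measurableSet_Ioi (fun x hx => hx))
      exact HasSubset.Subset.eventuallyLE (Set.Ioi_subset_Ioi hT0.le)
    calc (∫ x in Set.Ioi T, x ^ n * Real.exp (-α ^ 2 * x ^ 2 + β * x))
        ≤ (∫ x in Set.Ioi T, x ^ (n + 1) * Real.exp (-α ^ 2 * x ^ 2 + β * x)) / T := by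
          rw [← s2]; exact s1
      _ ≤ g3pJ α (n + 1) β / T := (div_le_div_iff_of_pos_right hT0).2 s3
  linarith [hsplit, h1, h2]

lemma g3pJ_lower {α : ℝ} (hα : 0 < α) (n : ℕ) {β : ℝ} (hβ : 0 < β) :
    (β / (4 * α ^ 2)) ^ (n + 1) * Real.exp (3 * β ^ 2 / (16 * α ^ 2)) ≤ g3pJ α n β := by
  set S : ℝ := β / (4 * α ^ 2) with hS
  have hS0 : 0 < S := by positivity
  have c1 : (∫ _ in Set.Ioc S (2 * S), S ^ n * Real.exp (3 * β ^ 2 / (16 * α ^ 2)))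
      ≤ ∫ x in Set.Ioc S (2 * S), x ^ n * Real.exp (-α ^ 2 * x ^ 2 + β * x) := by
    apply setIntegral_mono_on
    · exact integrableOn_const measure_Ioc_lt_top.ne
    · exact (g3pJ_integrable hα n β).mono_set (fun x hx => lt_trans hS0 hx.1)
    · exact measurableSet_Ioc
    · intro x hx
      have hx1 : S < x := hx.1
      have hx2 : x ≤ 2 * S := hx.2
      have e1 : S ^ n ≤ x ^ n := pow_le_pow_left₀ hS0.le hx1.le n
      have e2 : Real.exp (3 * β ^ 2 / (16 * α ^ 2)) ≤ Real.exp (-α ^ 2 * x ^ 2 + β * x) := by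
        apply Real.exp_le_exp.2
        have key : -α ^ 2 * x ^ 2 + β * x - 3 * β ^ 2 / (16 * α ^ 2)
            = α ^ 2 * (x - S) * (3 * S - x) := by
          rw [hS]; field_simp; ring
        nlinarith [sq_nonneg α, mul_nonneg (mul_nonneg (sq_nonneg α) (sub_nonneg.2 hx1.le))
          (sub_nonneg.2 (by linarith : x ≤ 3 * S))]
      exact mul_le_mul e1 e2 (Real.exp_pos _).le (pow_nonneg (by linarith) n)
  have c2 : (∫ x in Set.Ioc S (2 * S), x ^ n * Real.exp (-α ^ 2 * x ^ 2 + β * x))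
      ≤ g3pJ α n β := by
    apply setIntegral_mono_set (g3pJ_integrable hα n β) (g3pJ_nonneg_ae _ _ measurableSet_Ioi (fun x hx => hx))
    exact HasSubset.Subset.eventuallyLE (fun x hx => lt_trans hS0 hx.1)
  rw [setIntegral_const, Real.volume_real_Ioc_of_le (by linarith), smul_eq_mul] at c1
  calc S ^ (n + 1) * Real.exp (3 * β ^ 2 / (16 * α ^ 2))
      = (2 * S - S) * (S ^ n * Real.exp (3 * β ^ 2 / (16 * α ^ 2))) := by rw [pow_succ]; ring
    _ ≤ _ := le_trans c1 c2

lemma g3pJ_ratio_bound {α : ℝ} (hα : 0 < α) (n : ℕ) {β : ℝ} (hβ : 0 < β) :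
    g3pJ α n β / (β * g3pJ α (n + 1) β) ≤ 12 * α ^ 2 / β ^ 2 := by
  set A : ℝ := α ^ 2 with hA
  have hA0 : 0 < A := by positivity
  set T : ℝ := β / (8 * A) with hT
  set S : ℝ := β / (4 * A) with hS
  have hT0 : 0 < T := by positivity
  have hS0 : 0 < S := by positivity
  set E : ℝ := Real.exp (3 * β ^ 2 / (16 * A)) with hEdef
  have hE0 : 0 < E := Real.exp_pos _
  set J1 : ℝ := g3pJ α (n + 1) β with hJ1def
  have hJ1 : 0 < J1 := g3pJ_pos hα (n + 1) β
  have h1 : g3pJ α n β ≤ T ^ (n + 1) * Real.exp (β * T) + J1 / T := g3pJ_upper hα n hβ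
  have h2 : S ^ (n + 2) * E ≤ J1 := g3pJ_lower hα (n + 1) hβ
  -- T^{n+1} exp(βT) ≤ S^{n+1} E
  have hTS : T ^ (n + 1) * Real.exp (β * T) ≤ S ^ (n + 1) * E := by
    have e1 : T ≤ S := by
      rw [hT, hS, div_le_div_iff₀ (by positivity) (by positivity)]; nlinarith
    have e2 : β * T ≤ 3 * β ^ 2 / (16 * A) := by
      rw [hT, mul_div_assoc', div_le_div_iff₀ (by positivity) (by positivity)]; nlinarith
    exact mul_le_mul (pow_le_pow_left₀ hT0.le e1 _) (Real.exp_le_exp.2 e2) (Real.exp_pos _).le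
      (by positivity)
  -- S^{n+1} E ≤ J1 / S = 4A J1 / β
  have h3 : S ^ (n + 1) * E ≤ 4 * A * J1 / β := by
    have : S ^ (n + 1) * E * S ≤ J1 := by
      calc S ^ (n + 1) * E * S = S ^ (n + 2) * E := by rw [pow_succ]; ring
        _ ≤ J1 := h2
    have h4 : S ^ (n + 1) * E ≤ J1 / S := (le_div_iff₀ hS0).2 this
    have h5 : J1 / S = 4 * A * J1 / β := by rw [hS]; field_simp
    linarith
  have h6 : J1 / T = 8 * A * J1 / β := by rw [hT]; field_simp
  have hmain : g3pJ α n β ≤ 12 * A * J1 / β := by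
    have : 4 * A * J1 / β + 8 * A * J1 / β = 12 * A * J1 / β := by ring
    linarith
  calc g3pJ α n β / (β * J1) ≤ (12 * A * J1 / β) / (β * J1) :=
        div_le_div_of_nonneg_right hmain (by positivity)
    _ = 12 * A / β ^ 2 := by field_simp

lemma g3pJ_ratio_tendsto {α : ℝ} (hα : 0 < α) (n : ℕ) :
    Tendsto (fun β => g3pJ α n β / (β * g3pJ α (n + 1) β)) atTop (nhds 0) := by
  apply squeeze_zero'
  · filter_upwards [eventually_gt_atTop (0:ℝ)] with β hβ
    have h1 := g3pJ_pos hα n β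
    have h2 := g3pJ_pos hα (n + 1) β
    positivity
  · filter_upwards [eventually_gt_atTop (0:ℝ)] with β hβ
    exact g3pJ_ratio_bound hα n hβ
  · exact Tendsto.div_atTop tendsto_const_nhds (tendsto_pow_atTop two_ne_zero)


/-- Equation (e11): as `β → +∞` the mean of the three-parameter Gamma distribution
satisfies `μ(β) ~ β/(2α²)`, i.e. `2α²μ(β)/β → 1`. -/
theorem g3p_mean_asymptotic_atTop (γ : ℕ) (hγ : 0 < γ) (α : ℝ) (hα : 0 < α) :
    Tendsto (fun β : ℝ => 2 * α ^ 2 * g3pMean γ α β / β) atTop (nhds 1) := by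
  obtain ⟨n, rfl⟩ : ∃ n, γ = n + 1 := ⟨γ - 1, (Nat.succ_pred_eq_of_pos hγ).symm⟩
  have key : Tendsto (fun β => 1 + ((n : ℝ) + 1) * (g3pJ α n β / (β * g3pJ α (n + 1) β)))
      atTop (nhds 1) := by
    have h2 := ((g3pJ_ratio_tendsto hα n).const_mul ((n : ℝ) + 1)).const_add 1
    simpa using h2
  apply key.congr'
  filter_upwards [eventually_gt_atTop (0:ℝ)] with β hβ
  have hJ1 : g3pJ α (n + 1) β ≠ 0 := (g3pJ_pos hα (n + 1) β).ne'
  have hrec := g3pJ_recursion hα n β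
  have hmean : g3pMean (n + 1) α β = g3pJ α (n + 2) β / g3pJ α (n + 1) β := rfl
  rw [hmean]
  field_simp
  linear_combination (-1 : ℝ) * hrec
end

section
/- Fix a positive integer γ and a real α > 0. For β ∈ ℝ and k = 0, 1, 2 define M_k(β) = ∫₀^∞ x^{γ+k} e^{−α²x² + βx} dx, and set μ(β) = M₁(β)/M₀(β) and σ²(β) = M₂(β)/M₀(β) − μ(β)². Then lim_{β → +∞} σ²(β) = 1/(2α²). -/
open MeasureTheory Filter

namespace G3Paux

open Real Set

/-- The basic moment integrals `J n β = ∫₀^∞ xⁿ e^{−α²x²+βx}`. -/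
noncomputable def J (α : ℝ) (n : ℕ) (β : ℝ) : ℝ :=
  ∫ x in Set.Ioi (0 : ℝ), x ^ n * Real.exp (-α ^ 2 * x ^ 2 + β * x)

variable {α : ℝ}

lemma exp_bound (hα : 0 < α) (β x : ℝ) :
    Real.exp (-α ^ 2 * x ^ 2 + β * x)
      ≤ Real.exp (β ^ 2 / (2 * α ^ 2)) * Real.exp (-(α ^ 2 / 2) * x ^ 2) := by
  rw [← Real.exp_add, Real.exp_le_exp]
  have h2 : (0 : ℝ) < 2 * α ^ 2 := by positivity
  have key : β * x - α ^ 2 / 2 * x ^ 2 ≤ β ^ 2 / (2 * α ^ 2) := by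
    rw [le_div_iff₀ h2]
    nlinarith [sq_nonneg (α ^ 2 * x - β)]
  linarith

lemma integrableOn_rpow (hα : 0 < α) (β : ℝ) {s : ℝ} (hs : -1 < s) :
    IntegrableOn (fun x : ℝ => x ^ s * Real.exp (-α ^ 2 * x ^ 2 + β * x)) (Set.Ioi 0) := by
  have hh : (0 : ℝ) < α ^ 2 / 2 := by positivity
  have base := (integrableOn_rpow_mul_exp_neg_mul_sq hh hs).const_mul
    (Real.exp (β ^ 2 / (2 * α ^ 2)))
  refine base.mono' ?_ ?_
  · apply Measurable.aestronglyMeasurable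
    fun_prop
  · filter_upwards [ae_restrict_mem measurableSet_Ioi] with x hx
    have hx0 : (0 : ℝ) ≤ x := le_of_lt hx
    rw [Real.norm_eq_abs,
      abs_of_nonneg (mul_nonneg (Real.rpow_nonneg hx0 s) (Real.exp_pos _).le)]
    calc x ^ s * Real.exp (-α ^ 2 * x ^ 2 + β * x)
        ≤ x ^ s * (Real.exp (β ^ 2 / (2 * α ^ 2)) * Real.exp (-(α ^ 2 / 2) * x ^ 2)) :=
          mul_le_mul_of_nonneg_left (exp_bound hα β x) (Real.rpow_nonneg hx0 s)
      _ = Real.exp (β ^ 2 / (2 * α ^ 2)) * (x ^ s * Real.exp (-(α ^ 2 / 2) * x ^ 2)) := by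
          ring

lemma integrableOn_pow (hα : 0 < α) (β : ℝ) (n : ℕ) :
    IntegrableOn (fun x : ℝ => x ^ n * Real.exp (-α ^ 2 * x ^ 2 + β * x)) (Set.Ioi 0) := by
  have hs : (-1 : ℝ) < (n : ℝ) := lt_of_lt_of_le (by norm_num) (Nat.cast_nonneg n)
  refine (integrableOn_rpow hα β hs).congr_fun (fun x hx => ?_) measurableSet_Ioi
  simp only [Real.rpow_natCast]

lemma J_pos (hα : 0 < α) (β : ℝ) (n : ℕ) : 0 < J α n β := by
  rw [J, setIntegral_pos_iff_support_of_nonneg_ae ?_ (integrableOn_pow hα β n)]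
  · refine lt_of_lt_of_le (Measure.measure_Ioi_pos (volume : Measure ℝ) 0) (measure_mono fun x hx => ?_)
    refine ⟨?_, hx⟩
    have hx' : (0 : ℝ) < x := hx
    simp only [Function.mem_support]
    positivity
  · filter_upwards [ae_restrict_mem measurableSet_Ioi] with x hx
    have hx' : (0 : ℝ) < x := hx
    positivity

lemma tendsto_zero (hα : 0 < α) (β : ℝ) (n : ℕ) :
    Tendsto (fun x : ℝ => x ^ n * Real.exp (-α ^ 2 * x ^ 2 + β * x)) atTop (nhds 0) := by
  apply squeeze_zero' ?_ ?_ (tendsto_pow_mul_exp_neg_atTop_nhds_zero n)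
  · filter_upwards [eventually_ge_atTop (0 : ℝ)] with x hx
    positivity
  · filter_upwards [eventually_ge_atTop ((β + 1) / α ^ 2), eventually_ge_atTop (0 : ℝ)]
      with x h1 h2
    have h3 : β + 1 ≤ α ^ 2 * x := by
      rw [div_le_iff₀ (by positivity)] at h1
      linarith
    gcongr
    nlinarith

/-- Splitting a three-term combination of moment integrands. -/
lemma integral_split (hα : 0 < α) (β c1 c2 c3 : ℝ) (m : ℕ) :
    ∫ x in Set.Ioi (0 : ℝ),
      (c1 * (x ^ m * Real.exp (-α ^ 2 * x ^ 2 + β * x)) +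
        (c2 * (x ^ (m + 1) * Real.exp (-α ^ 2 * x ^ 2 + β * x)) +
          c3 * (x ^ (m + 2) * Real.exp (-α ^ 2 * x ^ 2 + β * x))))
      = c1 * J α m β + (c2 * J α (m + 1) β + c3 * J α (m + 2) β) := by
  have h1 : Integrable (fun x : ℝ => c1 * (x ^ m * Real.exp (-α ^ 2 * x ^ 2 + β * x)))
      (volume.restrict (Set.Ioi (0 : ℝ))) := (integrableOn_pow hα β m).const_mul _
  have h2 : Integrable (fun x : ℝ => c2 * (x ^ (m + 1) * Real.exp (-α ^ 2 * x ^ 2 + β * x)))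
      (volume.restrict (Set.Ioi (0 : ℝ))) := (integrableOn_pow hα β (m + 1)).const_mul _
  have h3 : Integrable (fun x : ℝ => c3 * (x ^ (m + 2) * Real.exp (-α ^ 2 * x ^ 2 + β * x)))
      (volume.restrict (Set.Ioi (0 : ℝ))) := (integrableOn_pow hα β (m + 2)).const_mul _
  have h23 : Integrable (fun x : ℝ =>
      c2 * (x ^ (m + 1) * Real.exp (-α ^ 2 * x ^ 2 + β * x)) +
        c3 * (x ^ (m + 2) * Real.exp (-α ^ 2 * x ^ 2 + β * x)))
      (volume.restrict (Set.Ioi (0 : ℝ))) := h2.add h3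
  rw [integral_add h1 h23, integral_add h2 h3, integral_const_mul, integral_const_mul,
    integral_const_mul]
  rfl

/-- Integration by parts identity (boundary term vanishes since `m+1 ≥ 1`). -/
lemma ibp (hα : 0 < α) (β : ℝ) (m : ℕ) :
    ∫ x in Set.Ioi (0 : ℝ),
      (((m : ℝ) + 1) * x ^ m + (β - 2 * α ^ 2 * x) * x ^ (m + 1)) *
        Real.exp (-α ^ 2 * x ^ 2 + β * x) = 0 := by
  have hderiv : ∀ x : ℝ, HasDerivAt (fun x : ℝ => x ^ (m + 1) * Real.exp (-α ^ 2 * x ^ 2 + β * x))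
      ((((m : ℝ) + 1) * x ^ m + (β - 2 * α ^ 2 * x) * x ^ (m + 1)) *
        Real.exp (-α ^ 2 * x ^ 2 + β * x)) x := by
    intro x
    have hg : HasDerivAt (fun x : ℝ => -α ^ 2 * x ^ 2 + β * x) (-α ^ 2 * (2 * x ^ 1) + β * 1) x :=
      ((hasDerivAt_pow 2 x).const_mul (-α ^ 2)).add ((hasDerivAt_id x).const_mul β)
    have h := (hasDerivAt_pow (m + 1) x).mul hg.exp
    refine h.congr_deriv ?_
    rw [Nat.add_sub_cancel]
    push_cast
    ring
  have f'int : IntegrableOn (fun x : ℝ =>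
      (((m : ℝ) + 1) * x ^ m + (β - 2 * α ^ 2 * x) * x ^ (m + 1)) *
        Real.exp (-α ^ 2 * x ^ 2 + β * x)) (Set.Ioi 0) := by
    have hcomb : IntegrableOn (fun x : ℝ =>
        ((m : ℝ) + 1) * (x ^ m * Real.exp (-α ^ 2 * x ^ 2 + β * x)) +
        (β * (x ^ (m + 1) * Real.exp (-α ^ 2 * x ^ 2 + β * x)) +
          (-(2 * α ^ 2)) * (x ^ (m + 2) * Real.exp (-α ^ 2 * x ^ 2 + β * x)))) (Set.Ioi 0) :=
      ((integrableOn_pow hα β m).const_mul _).add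
        (((integrableOn_pow hα β (m + 1)).const_mul _).add
          ((integrableOn_pow hα β (m + 2)).const_mul _))
    refine hcomb.congr_fun (fun x hx => ?_) measurableSet_Ioi
    ring
  have key := integral_Ioi_of_hasDerivAt_of_tendsto' (a := 0)
    (fun x _ => hderiv x) f'int (tendsto_zero hα β (m + 1))
  rw [key]
  simp

/-- Integration by parts with `f(0) = 1` boundary term. -/
lemma ibp0 (hα : 0 < α) (β : ℝ) :
    ∫ x in Set.Ioi (0 : ℝ),
      (β - 2 * α ^ 2 * x) * Real.exp (-α ^ 2 * x ^ 2 + β * x) = -1 := by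
  have hderiv : ∀ x : ℝ, HasDerivAt (fun x : ℝ => Real.exp (-α ^ 2 * x ^ 2 + β * x))
      ((β - 2 * α ^ 2 * x) * Real.exp (-α ^ 2 * x ^ 2 + β * x)) x := by
    intro x
    have hg : HasDerivAt (fun x : ℝ => -α ^ 2 * x ^ 2 + β * x) (-α ^ 2 * (2 * x ^ 1) + β * 1) x :=
      ((hasDerivAt_pow 2 x).const_mul (-α ^ 2)).add ((hasDerivAt_id x).const_mul β)
    have h := hg.exp
    convert h using 1
    ring
  have f'int : IntegrableOn (fun x : ℝ =>
      (β - 2 * α ^ 2 * x) * Real.exp (-α ^ 2 * x ^ 2 + β * x)) (Set.Ioi 0) := by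
    have hcomb : IntegrableOn (fun x : ℝ =>
        β * (x ^ 0 * Real.exp (-α ^ 2 * x ^ 2 + β * x)) +
        (-(2 * α ^ 2)) * (x ^ 1 * Real.exp (-α ^ 2 * x ^ 2 + β * x))) (Set.Ioi 0) :=
      ((integrableOn_pow hα β 0).const_mul _).add ((integrableOn_pow hα β 1).const_mul _)
    refine hcomb.congr_fun (fun x hx => ?_) measurableSet_Ioi
    ring
  have htend : Tendsto (fun x : ℝ => Real.exp (-α ^ 2 * x ^ 2 + β * x)) atTop (nhds 0) := by
    have h := tendsto_zero hα β 0
    simpa using h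
  have key := integral_Ioi_of_hasDerivAt_of_tendsto' (a := 0)
    (fun x _ => hderiv x) f'int htend
  rw [key]
  simp

/-- The recurrence `2α² J_{m+2} = β J_{m+1} + (m+1) J_m`. -/
lemma recur (hα : 0 < α) (β : ℝ) (m : ℕ) :
    2 * α ^ 2 * J α (m + 2) β = β * J α (m + 1) β + ((m : ℝ) + 1) * J α m β := by
  have h := ibp hα β m
  have hfun : (fun x : ℝ =>
      (((m : ℝ) + 1) * x ^ m + (β - 2 * α ^ 2 * x) * x ^ (m + 1)) *
        Real.exp (-α ^ 2 * x ^ 2 + β * x)) = fun x : ℝ =>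
      ((m : ℝ) + 1) * (x ^ m * Real.exp (-α ^ 2 * x ^ 2 + β * x)) +
        (β * (x ^ (m + 1) * Real.exp (-α ^ 2 * x ^ 2 + β * x)) +
          (-(2 * α ^ 2)) * (x ^ (m + 2) * Real.exp (-α ^ 2 * x ^ 2 + β * x))) :=
    funext fun x => by ring
  rw [hfun, integral_split hα β _ _ _ m] at h
  linarith

/-- `β J_m ≤ 2α² J_{m+1}` for all `m`. -/
lemma beta_mul_le (hα : 0 < α) (β : ℝ) (m : ℕ) : β * J α m β ≤ 2 * α ^ 2 * J α (m + 1) β := by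
  cases m with
  | zero =>
    have h := ibp0 hα β
    have hfun : (fun x : ℝ => (β - 2 * α ^ 2 * x) * Real.exp (-α ^ 2 * x ^ 2 + β * x))
        = fun x : ℝ =>
        β * (x ^ 0 * Real.exp (-α ^ 2 * x ^ 2 + β * x)) +
          ((-(2 * α ^ 2)) * (x ^ 1 * Real.exp (-α ^ 2 * x ^ 2 + β * x)) +
            0 * (x ^ 2 * Real.exp (-α ^ 2 * x ^ 2 + β * x))) :=
      funext fun x => by ring
    rw [hfun, integral_split hα β _ _ _ 0] at h
    norm_num at h ⊢
    linarith
  | succ k =>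
    have h := recur hα β k
    have hp := J_pos hα β k
    have h2 : (0 : ℝ) ≤ ((k : ℝ) + 1) * J α k β := by positivity
    linarith

/-- Cauchy–Schwarz: `J_{m+1}² ≤ J_m · J_{m+2}`. -/
lemma cauchy_schwarz (hα : 0 < α) (β : ℝ) (m : ℕ) :
    (J α (m + 1) β) ^ 2 ≤ J α m β * J α (m + 2) β := by
  set μ := (volume : Measure ℝ).restrict (Set.Ioi (0 : ℝ)) with hμ
  set f : ℝ → ℝ := fun x => x ^ ((m : ℝ) / 2) * Real.exp ((-α ^ 2 * x ^ 2 + β * x) / 2) with hf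
  set g : ℝ → ℝ := fun x => x ^ (((m : ℝ) + 2) / 2) * Real.exp ((-α ^ 2 * x ^ 2 + β * x) / 2)
    with hg
  have hmeas_f : AEStronglyMeasurable f μ := by
    apply Measurable.aestronglyMeasurable; fun_prop
  have hmeas_g : AEStronglyMeasurable g μ := by
    apply Measurable.aestronglyMeasurable; fun_prop
  have hae : ∀ᵐ x ∂μ, x ∈ Set.Ioi (0 : ℝ) := ae_restrict_mem measurableSet_Ioi
  have hf_nonneg : 0 ≤ᵐ[μ] f := by
    filter_upwards [hae] with x hx
    have hx' : (0 : ℝ) < x := hx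
    positivity
  have hg_nonneg : 0 ≤ᵐ[μ] g := by
    filter_upwards [hae] with x hx
    have hx' : (0 : ℝ) < x := hx
    positivity
  have hfsq : (fun x => f x ^ 2)
      =ᵐ[μ] fun x : ℝ => x ^ m * Real.exp (-α ^ 2 * x ^ 2 + β * x) := by
    filter_upwards [hae] with x hx
    have hx' : (0 : ℝ) < x := hx
    have e1 : (x ^ ((m : ℝ) / 2)) ^ 2 = x ^ m := by
      rw [← Real.rpow_natCast (x ^ ((m : ℝ) / 2)) 2, ← Real.rpow_mul hx'.le,
        ← Real.rpow_natCast x m]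
      congr 1
      push_cast
      ring
    have e2 : Real.exp ((-α ^ 2 * x ^ 2 + β * x) / 2) ^ 2
        = Real.exp (-α ^ 2 * x ^ 2 + β * x) := by
      rw [← Real.exp_nat_mul]
      congr 1
      push_cast
      ring
    calc f x ^ 2
        = (x ^ ((m : ℝ) / 2)) ^ 2 * Real.exp ((-α ^ 2 * x ^ 2 + β * x) / 2) ^ 2 := by
          simp only [hf]; ring
      _ = x ^ m * Real.exp (-α ^ 2 * x ^ 2 + β * x) := by rw [e1, e2]
  have hgsq : (fun x => g x ^ 2)
      =ᵐ[μ] fun x : ℝ => x ^ (m + 2) * Real.exp (-α ^ 2 * x ^ 2 + β * x) := by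
    filter_upwards [hae] with x hx
    have hx' : (0 : ℝ) < x := hx
    have e1 : (x ^ (((m : ℝ) + 2) / 2)) ^ 2 = x ^ (m + 2) := by
      rw [← Real.rpow_natCast (x ^ (((m : ℝ) + 2) / 2)) 2, ← Real.rpow_mul hx'.le,
        ← Real.rpow_natCast x (m + 2)]
      congr 1
      push_cast
      ring
    have e2 : Real.exp ((-α ^ 2 * x ^ 2 + β * x) / 2) ^ 2
        = Real.exp (-α ^ 2 * x ^ 2 + β * x) := by
      rw [← Real.exp_nat_mul]
      congr 1
      push_cast
      ring
    calc g x ^ 2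
        = (x ^ (((m : ℝ) + 2) / 2)) ^ 2 * Real.exp ((-α ^ 2 * x ^ 2 + β * x) / 2) ^ 2 := by
          simp only [hg]; ring
      _ = x ^ (m + 2) * Real.exp (-α ^ 2 * x ^ 2 + β * x) := by rw [e1, e2]
  have hfg : (fun x => f x * g x)
      =ᵐ[μ] fun x : ℝ => x ^ (m + 1) * Real.exp (-α ^ 2 * x ^ 2 + β * x) := by
    filter_upwards [hae] with x hx
    have hx' : (0 : ℝ) < x := hx
    have e3 : x ^ ((m : ℝ) / 2) * x ^ (((m : ℝ) + 2) / 2) = x ^ (m + 1) := by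
      rw [← Real.rpow_add hx', ← Real.rpow_natCast x (m + 1)]
      congr 1
      push_cast
      ring
    have e4 : Real.exp ((-α ^ 2 * x ^ 2 + β * x) / 2) *
        Real.exp ((-α ^ 2 * x ^ 2 + β * x) / 2) = Real.exp (-α ^ 2 * x ^ 2 + β * x) := by
      rw [← Real.exp_add]
      congr 1
      ring
    calc f x * g x
        = x ^ ((m : ℝ) / 2) * x ^ (((m : ℝ) + 2) / 2) *
            (Real.exp ((-α ^ 2 * x ^ 2 + β * x) / 2) *
              Real.exp ((-α ^ 2 * x ^ 2 + β * x) / 2)) := by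
          simp only [hf, hg]; ring
      _ = x ^ (m + 1) * Real.exp (-α ^ 2 * x ^ 2 + β * x) := by rw [e3, e4]
  have hfL2 : MemLp f 2 μ := by
    rw [memLp_two_iff_integrable_sq hmeas_f]
    exact (integrableOn_pow hα β m).congr hfsq.symm
  have hgL2 : MemLp g 2 μ := by
    rw [memLp_two_iff_integrable_sq hmeas_g]
    exact (integrableOn_pow hα β (m + 2)).congr hgsq.symm
  have hpq : Real.HolderConjugate 2 2 := Real.HolderConjugate.two_two
  have holder := integral_mul_le_Lp_mul_Lq_of_nonneg hpq hf_nonneg hg_nonneg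
    (by simpa using hfL2) (by simpa using hgL2)
  have hIfg : ∫ x, f x * g x ∂μ = J α (m + 1) β := integral_congr_ae hfg
  have hIf2 : ∫ x, f x ^ (2 : ℝ) ∂μ = J α m β := by
    refine integral_congr_ae ?_
    filter_upwards [hfsq] with x hx
    rw [show (2 : ℝ) = ((2 : ℕ) : ℝ) by norm_num, Real.rpow_natCast]
    exact hx
  have hIg2 : ∫ x, g x ^ (2 : ℝ) ∂μ = J α (m + 2) β := by
    refine integral_congr_ae ?_
    filter_upwards [hgsq] with x hx
    rw [show (2 : ℝ) = ((2 : ℕ) : ℝ) by norm_num, Real.rpow_natCast]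
    exact hx
  rw [hIfg, hIf2, hIg2] at holder
  have hA : (0 : ℝ) < J α m β := J_pos hα β m
  have hC : (0 : ℝ) < J α (m + 2) β := J_pos hα β (m + 2)
  have hB : (0 : ℝ) ≤ J α (m + 1) β := (J_pos hα β (m + 1)).le
  calc (J α (m + 1) β) ^ 2
      ≤ ((J α m β) ^ ((1 : ℝ) / 2) * (J α (m + 2) β) ^ ((1 : ℝ) / 2)) ^ 2 :=
        pow_le_pow_left₀ hB holder 2
    _ = J α m β * J α (m + 2) β := by
        rw [mul_pow, ← Real.rpow_natCast ((J α m β) ^ ((1 : ℝ) / 2)) 2,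
          ← Real.rpow_natCast ((J α (m + 2) β) ^ ((1 : ℝ) / 2)) 2,
          ← Real.rpow_mul hA.le, ← Real.rpow_mul hC.le]
        norm_num

end G3Paux

open G3Paux in
/-- Equation (e12): as `β → +∞` the variance of the three-parameter Gamma distribution
converges to `1/(2α²)`. -/
theorem g3p_var_tendsto_atTop (γ : ℕ) (hγ : 0 < γ) (α : ℝ) (hα : 0 < α) :
    Tendsto (fun β : ℝ => g3pVar γ α β) atTop (nhds (1 / (2 * α ^ 2))) := by
  obtain ⟨m, rfl⟩ : ∃ m, γ = m + 1 := ⟨γ - 1, by omega⟩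
  have h2a : (0 : ℝ) < 2 * α ^ 2 := by positivity
  have key : ∀ β : ℝ, 0 < β →
      1 / (2 * α ^ 2) - ((m : ℝ) + 1) ^ 2 / β ^ 2 ≤ g3pVar (m + 1) α β ∧
      g3pVar (m + 1) α β ≤ 1 / (2 * α ^ 2) := by
    intro β hβ
    have hA : (0 : ℝ) < J α m β := J_pos hα β m
    have hB : (0 : ℝ) < J α (m + 1) β := J_pos hα β (m + 1)
    have hC : (0 : ℝ) < J α (m + 2) β := J_pos hα β (m + 2)
    have hD : (0 : ℝ) < J α (m + 3) β := J_pos hα β (m + 3)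
    set A := J α m β
    set B := J α (m + 1) β
    set C := J α (m + 2) β
    set D := J α (m + 3) β
    have hrec1 : 2 * α ^ 2 * C = β * B + ((m : ℝ) + 1) * A := recur hα β m
    have hrec2 : 2 * α ^ 2 * D = β * C + ((m : ℝ) + 2) * B := by
      have h := recur hα β (m + 1)
      have e1 : m + 1 + 2 = m + 3 := by omega
      have e2 : m + 1 + 1 = m + 2 := by omega
      rw [e1, e2] at h
      push_cast at h
      linarith
    have hCS : B ^ 2 ≤ A * C := cauchy_schwarz hα β m
    have hmono : β * A ≤ 2 * α ^ 2 * B := beta_mul_le hα β m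
    have hq : 2 * α ^ 2 * (β ^ 2 * (A * C))
        ≤ β ^ 2 * (2 * α ^ 2 * B ^ 2) + ((m : ℝ) + 1) * (2 * α ^ 2) ^ 2 * B ^ 2 := by
      have t1 := mul_le_mul_of_nonneg_right hmono (show (0 : ℝ) ≤ β ^ 2 * B by positivity)
      have t2 := pow_le_pow_left₀ (show (0 : ℝ) ≤ β * A by positivity) hmono 2
      have t3 : ((m : ℝ) + 1) * (β * A) ^ 2 ≤ ((m : ℝ) + 1) * (2 * α ^ 2 * B) ^ 2 :=
        mul_le_mul_of_nonneg_left t2 (by positivity)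
      calc 2 * α ^ 2 * (β ^ 2 * (A * C)) = β ^ 2 * A * (2 * α ^ 2 * C) := by ring
        _ = β * A * (β ^ 2 * B) + ((m : ℝ) + 1) * (β * A) ^ 2 := by rw [hrec1]; ring
        _ ≤ 2 * α ^ 2 * B * (β ^ 2 * B) + ((m : ℝ) + 1) * (2 * α ^ 2 * B) ^ 2 := by
            linarith
        _ = β ^ 2 * (2 * α ^ 2 * B ^ 2) + ((m : ℝ) + 1) * (2 * α ^ 2) ^ 2 * B ^ 2 := by ring
    have hveq : g3pVar (m + 1) α β
        = (((m : ℝ) + 2) * B ^ 2 - ((m : ℝ) + 1) * (A * C)) / (2 * α ^ 2 * B ^ 2) := by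
      have e : g3pVar (m + 1) α β = D / B - (C / B) ^ 2 := rfl
      have h1 : D / B - (C / B) ^ 2
          = (2 * α ^ 2 * D * B - 2 * α ^ 2 * C ^ 2) / (2 * α ^ 2 * B ^ 2) := by
        field_simp
      have h2 : 2 * α ^ 2 * D * B - 2 * α ^ 2 * C ^ 2
          = ((m : ℝ) + 2) * B ^ 2 - ((m : ℝ) + 1) * (A * C) := by
        linear_combination B * hrec2 - C * hrec1
      rw [e, h1, h2]
    constructor
    · have hKeq : 1 / (2 * α ^ 2) - ((m : ℝ) + 1) ^ 2 / β ^ 2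
          = (β ^ 2 - ((m : ℝ) + 1) ^ 2 * (2 * α ^ 2)) / (2 * α ^ 2 * β ^ 2) := by
        field_simp
      rw [hKeq, hveq, div_le_div_iff₀ (by positivity) (by positivity)]
      nlinarith [mul_le_mul_of_nonneg_left hq (show (0 : ℝ) ≤ (m : ℝ) + 1 by positivity)]
    · rw [hveq, div_le_div_iff₀ (by positivity) h2a]
      nlinarith [mul_le_mul_of_nonneg_left hCS
        (show (0 : ℝ) ≤ ((m : ℝ) + 1) * (2 * α ^ 2) by positivity)]
  have hlo : Tendsto (fun β : ℝ => 1 / (2 * α ^ 2) - ((m : ℝ) + 1) ^ 2 / β ^ 2) atTop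
      (nhds (1 / (2 * α ^ 2))) := by
    have h0 : Tendsto (fun β : ℝ => ((m : ℝ) + 1) ^ 2 / β ^ 2) atTop (nhds 0) :=
      Tendsto.div_atTop tendsto_const_nhds (tendsto_pow_atTop (by norm_num))
    simpa using tendsto_const_nhds.sub h0
  refine tendsto_of_tendsto_of_tendsto_of_le_of_le' hlo tendsto_const_nhds ?_ ?_
  · filter_upwards [eventually_gt_atTop (0 : ℝ)] with β hβ
    exact (key β hβ).1
  · filter_upwards [eventually_gt_atTop (0 : ℝ)] with β hβ
    exact (key β hβ).2
end
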